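/- arXiv:2506.09394 — 5 statements merged into one kernel-verified Lean document; each statement's English description precedes it below -/
import Mathlib

section
/- Let A ∈ ℝ^{m×n}, b ∈ ℝ^m with Ax = b consistent, B ∈ ℝ^{n×n} symmetric positive definite, Q ∈ ℝ^{d×m}, and let x^0 satisfy QAx^0 = Qb. Let x^{k+1} be the minimizer of ||x − x^k||_B over all x satisfying SAx = Sb and QAx = Qb, for a sketching matrix S ∈ ℝ^{ℓ×m}. Then x^{k+1} = x^k − B^{−1/2} P B^{−1/2} Aᵀ Sᵀ (S A B^{−1/2} P B^{−1/2} Aᵀ Sᵀ)† S (A x^k − b), where P := I − (Q A B^{−1/2})† Q A B^{−1/2} is the orthogonal projector onto the nullspace of Q A B^{−1/2}. -/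
open Matrix

/-- `Mp` is the Moore–Penrose pseudoinverse of `M` (the four Penrose conditions,
which characterize it uniquely). -/
def IsMoorePenrose {k l : Type*} [Fintype k] [Fintype l]
    (M : Matrix k l ℝ) (Mp : Matrix l k ℝ) : Prop :=
  M * Mp * M = M ∧ Mp * M * Mp = Mp ∧ (M * Mp)ᵀ = M * Mp ∧ (Mp * M)ᵀ = Mp * M

/-- The positive semidefinite square root of a positive semidefinite matrix, as defined in
Mathlib (Dec 2024) under this name (since removed from Mathlib). -/
noncomputable def Matrix.PosSemidef.sqrt {n : Type*} [Fintype n] [DecidableEq n]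
    {A : Matrix n n ℝ} (hA : A.PosSemidef) : Matrix n n ℝ :=
  (hA.1.eigenvectorUnitary : Matrix n n ℝ) * diagonal ((↑) ∘ (√·) ∘ hA.1.eigenvalues) *
  (star hA.1.eigenvectorUnitary : Matrix n n ℝ)

private lemma psd_sqrt_mul_self {n : Type*} [Fintype n] [DecidableEq n]
    {A : Matrix n n ℝ} (hA : A.PosSemidef) : hA.sqrt * hA.sqrt = A := by
  have hU : (star hA.1.eigenvectorUnitary : Matrix n n ℝ) * (hA.1.eigenvectorUnitary : Matrix n n ℝ) = 1 :=
    Unitary.coe_star_mul_self _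
  have hD : diagonal ((↑) ∘ (√·) ∘ hA.1.eigenvalues) * diagonal ((↑) ∘ (√·) ∘ hA.1.eigenvalues)
      = diagonal (RCLike.ofReal ∘ hA.1.eigenvalues : n → ℝ) := by
    rw [diagonal_mul_diagonal]
    congr 1
    funext i
    simp [Real.mul_self_sqrt (hA.eigenvalues_nonneg i)]
  conv_rhs => rw [hA.1.spectral_theorem, Unitary.conjStarAlgAut_apply]
  unfold Matrix.PosSemidef.sqrt
  calc _ = (hA.1.eigenvectorUnitary : Matrix n n ℝ) * (diagonal ((↑) ∘ (√·) ∘ hA.1.eigenvalues) *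
      ((star hA.1.eigenvectorUnitary : Matrix n n ℝ) * (hA.1.eigenvectorUnitary : Matrix n n ℝ)) *
      diagonal ((↑) ∘ (√·) ∘ hA.1.eigenvalues)) * (star hA.1.eigenvectorUnitary : Matrix n n ℝ) := by
        simp only [Matrix.mul_assoc]
    _ = _ := by rw [hU, Matrix.mul_one, hD]

private lemma psd_sqrt_conjTranspose {n : Type*} [Fintype n] [DecidableEq n]
    {A : Matrix n n ℝ} (hA : A.PosSemidef) : hA.sqrtᴴ = hA.sqrt := by
  unfold Matrix.PosSemidef.sqrt
  rw [conjTranspose_mul, conjTranspose_mul, diagonal_conjTranspose,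
    star_eq_conjTranspose, conjTranspose_conjTranspose, Matrix.mul_assoc]
  congr 3

private lemma mulVec_dot {a c : ℕ} (M : Matrix (Fin a) (Fin c) ℝ) (x : Fin c → ℝ)
    (y : Fin a → ℝ) : (M *ᵥ x) ⬝ᵥ y = x ⬝ᵥ (Mᵀ *ᵥ y) := by
  rw [dotProduct_comm, dotProduct_mulVec, ← mulVec_transpose, dotProduct_comm]

/-- closed-form update of subspace-constrained sketch-and-project.
If `xk1` minimizes `‖x - xk‖_B` subject to `SAx = Sb` and `QAx = Qb`, then
`xk1 = xk − B^{−1/2} P B^{−1/2} Aᵀ Sᵀ (S A B^{−1/2} P B^{−1/2} Aᵀ Sᵀ)† S (A xk − b)`,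
where `P = I − (QAB^{−1/2})† QAB^{−1/2}`. -/
theorem stmt_0 {m n d l : ℕ}
    (A : Matrix (Fin m) (Fin n) ℝ) (b : Fin m → ℝ)
    (hconsistent : ∃ x, A *ᵥ x = b)
    (B : Matrix (Fin n) (Fin n) ℝ) (hB : B.PosDef)
    (Q : Matrix (Fin d) (Fin m) ℝ) (S : Matrix (Fin l) (Fin m) ℝ)
    -- `Bih` is `B^{-1/2}`, the inverse of the positive definite square root of `B`
    (Bih : Matrix (Fin n) (Fin n) ℝ) (hBih : Bih = (hB.posSemidef.sqrt)⁻¹)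
    -- `N1 = (Q A B^{-1/2})†` and `P = I - N1 (Q A B^{-1/2})`
    (N1 : Matrix (Fin n) (Fin d) ℝ) (hN1 : IsMoorePenrose (Q * A * Bih) N1)
    (P : Matrix (Fin n) (Fin n) ℝ) (hP : P = 1 - N1 * (Q * A * Bih))
    -- `N2 = (S A B^{-1/2} P B^{-1/2} Aᵀ Sᵀ)†`
    (N2 : Matrix (Fin l) (Fin l) ℝ)
    (hN2 : IsMoorePenrose (S * A * Bih * P * Bih * Aᵀ * Sᵀ) N2)
    -- the initial iterate satisfies `Q A x0 = Q b`
    (x0 : Fin n → ℝ) (hx0 : (Q * A) *ᵥ x0 = Q *ᵥ b)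
    -- the current iterate satisfies `Q A xk = Q b`
    (xk xk1 : Fin n → ℝ) (hxk : (Q * A) *ᵥ xk = Q *ᵥ b)
    -- `xk1` is the minimizer of `‖x - xk‖_B` subject to `SAx = Sb`, `QAx = Qb`
    (hxk1S : (S * A) *ᵥ xk1 = S *ᵥ b)
    (hxk1Q : (Q * A) *ᵥ xk1 = Q *ᵥ b)
    (hxk1min : ∀ y : Fin n → ℝ, (S * A) *ᵥ y = S *ᵥ b → (Q * A) *ᵥ y = Q *ᵥ b →
      (xk1 - xk) ⬝ᵥ (B *ᵥ (xk1 - xk)) ≤ (y - xk) ⬝ᵥ (B *ᵥ (y - xk))) :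
    xk1 = xk - (Bih * P * Bih * Aᵀ * Sᵀ * N2 * S) *ᵥ (A *ᵥ xk - b) := by
  obtain ⟨hN1a, hN1b, hN1c, hN1d⟩ := hN1
  obtain ⟨hN2a, hN2b, hN2c, hN2d⟩ := hN2
  set H := hB.posSemidef.sqrt with hHdef
  -- basic facts about `H = B^{1/2}` and `Bih = H⁻¹`
  have hHH : H * H = B := psd_sqrt_mul_self hB.posSemidef
  have hHsym : Hᵀ = H := by
    have h : Hᴴ = H := psd_sqrt_conjTranspose hB.posSemidef
    rwa [conjTranspose_eq_transpose_of_trivial] at h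
  have hdetH : IsUnit H.det := by
    have hu : IsUnit B.det := hB.det_pos.ne'.isUnit
    rw [← hHH, det_mul] at hu
    exact isUnit_of_mul_isUnit_left hu
  have hBihH : Bih * H = 1 := by rw [hBih]; exact nonsing_inv_mul _ hdetH
  have hHBih : H * Bih = 1 := by rw [hBih]; exact mul_nonsing_inv _ hdetH
  have hBihT : Bihᵀ = Bih := by rw [hBih, transpose_nonsing_inv, hHsym]
  have hBBih : Bih * B * Bih = 1 := by
    rw [← hHH, ← Matrix.mul_assoc Bih, hBihH, Matrix.one_mul, hHBih]
  -- facts about the projector `P`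
  have hPT : Pᵀ = P := by rw [hP, transpose_sub, transpose_one, hN1d]
  have hN1KK : N1 * (Q * A * Bih) * (N1 * (Q * A * Bih)) = N1 * (Q * A * Bih) := by
    rw [← Matrix.mul_assoc, hN1b]
  have hPP : P * P = P := by
    rw [hP, sub_mul, one_mul, mul_sub, mul_one, hN1KK, sub_self, sub_zero]
  have hKP : Q * A * Bih * P = 0 := by
    rw [hP, Matrix.mul_sub, Matrix.mul_one, ← Matrix.mul_assoc, hN1a, sub_self]
  -- transpose of `M = S A Bih P`
  have hMT : (S * A * Bih * P)ᵀ = P * Bih * Aᵀ * Sᵀ := by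
    simp only [transpose_mul, hPT, hBihT, Matrix.mul_assoc]
  have hMT2 : (P * Bih * Aᵀ * Sᵀ)ᵀ = S * A * Bih * P := by
    rw [← hMT, transpose_transpose]
  have hMMT : S * A * Bih * P * (P * Bih * Aᵀ * Sᵀ) = S * A * Bih * P * Bih * Aᵀ * Sᵀ := by
    calc S * A * Bih * P * (P * Bih * Aᵀ * Sᵀ)
        = S * A * Bih * (P * P) * (Bih * Aᵀ * Sᵀ) := by simp only [Matrix.mul_assoc]
      _ = S * A * Bih * P * Bih * Aᵀ * Sᵀ := by rw [hPP]; simp only [Matrix.mul_assoc]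
  have hGT : (S * A * Bih * P * Bih * Aᵀ * Sᵀ)ᵀ = S * A * Bih * P * Bih * Aᵀ * Sᵀ := by
    conv_lhs => rw [← hMMT]
    rw [transpose_mul, hMT, hMT2, hMMT]
  -- `E M = M` where `E = G N2`
  have hzero : ((1 - (S * A * Bih * P * Bih * Aᵀ * Sᵀ) * N2) * (S * A * Bih * P)) *
      ((1 - (S * A * Bih * P * Bih * Aᵀ * Sᵀ) * N2) * (S * A * Bih * P))ᵀ = 0 := by
    rw [transpose_mul, hMT, transpose_sub, transpose_one, hN2c]
    calc ((1 - (S * A * Bih * P * Bih * Aᵀ * Sᵀ) * N2) * (S * A * Bih * P)) *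
        ((P * Bih * Aᵀ * Sᵀ) * (1 - (S * A * Bih * P * Bih * Aᵀ * Sᵀ) * N2))
        = (1 - (S * A * Bih * P * Bih * Aᵀ * Sᵀ) * N2) *
            ((S * A * Bih * P) * (P * Bih * Aᵀ * Sᵀ)) *
            (1 - (S * A * Bih * P * Bih * Aᵀ * Sᵀ) * N2) := by simp only [Matrix.mul_assoc]
      _ = 0 := by rw [hMMT, Matrix.sub_mul, Matrix.one_mul, hN2a, sub_self, Matrix.zero_mul]
  have hEM : (S * A * Bih * P * Bih * Aᵀ * Sᵀ) * N2 * (S * A * Bih * P) = S * A * Bih * P := by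
    have h0 : (1 - (S * A * Bih * P * Bih * Aᵀ * Sᵀ) * N2) * (S * A * Bih * P) = 0 := by
      rw [← Matrix.self_mul_conjTranspose_eq_zero
        (A := (1 - (S * A * Bih * P * Bih * Aᵀ * Sᵀ) * N2) * (S * A * Bih * P)),
        conjTranspose_eq_transpose_of_trivial]
      exact hzero
    rw [Matrix.sub_mul, Matrix.one_mul, sub_eq_zero] at h0
    rw [← Matrix.mul_assoc] at h0 ⊢
    exact h0.symm
  -- vectors
  set u1 : Fin n → ℝ := H *ᵥ (xk1 - xk) with hu1def
  set c : Fin l → ℝ := S *ᵥ b - (S * A) *ᵥ xk with hcdef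
  set z : Fin l → ℝ := N2 *ᵥ c with hzdef
  set u2 : Fin n → ℝ := (P * Bih * Aᵀ * Sᵀ) *ᵥ z with hu2def
  have h1 : Bih *ᵥ u1 = xk1 - xk := by rw [hu1def, mulVec_mulVec, hBihH, one_mulVec]
  have hcu1 : (S * A * Bih) *ᵥ u1 = c := by
    rw [hu1def, mulVec_mulVec, Matrix.mul_assoc (S * A), hBihH, Matrix.mul_one,
      mulVec_sub, hxk1S, ← hcdef]
  have hKu1 : (Q * A * Bih) *ᵥ u1 = 0 := by
    rw [hu1def, mulVec_mulVec, Matrix.mul_assoc (Q * A), hBihH, Matrix.mul_one,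
      mulVec_sub, hxk1Q, hxk, sub_self]
  have hPu1 : P *ᵥ u1 = u1 := by
    rw [hP, sub_mulVec, one_mulVec, ← mulVec_mulVec, hKu1, mulVec_zero, sub_zero]
  have hMu1 : (S * A * Bih * P) *ᵥ u1 = c := by
    rw [← mulVec_mulVec, hPu1]; exact hcu1
  have hMu2 : (S * A * Bih * P) *ᵥ u2 = c := by
    rw [hu2def, hzdef, mulVec_mulVec, mulVec_mulVec, hMMT]
    conv_lhs => rw [← hMu1]
    rw [mulVec_mulVec, hEM, hMu1]
  have hPu2 : P *ᵥ u2 = u2 := by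
    rw [hu2def, mulVec_mulVec]
    have hPM : P * (P * Bih * Aᵀ * Sᵀ) = P * Bih * Aᵀ * Sᵀ := by
      calc P * (P * Bih * Aᵀ * Sᵀ) = P * P * (Bih * Aᵀ * Sᵀ) := by simp only [Matrix.mul_assoc]
        _ = P * Bih * Aᵀ * Sᵀ := by rw [hPP]; simp only [Matrix.mul_assoc]
    rw [hPM]
  have hKu2 : (Q * A * Bih) *ᵥ u2 = 0 := by
    rw [← hPu2, mulVec_mulVec, hKP, zero_mulVec]
  have hcu2 : (S * A * Bih) *ᵥ u2 = c := by
    rw [← hPu2, mulVec_mulVec]; exact hMu2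
  -- feasibility of `y = xk + Bih u2`
  have hySA : (S * A) *ᵥ (xk + Bih *ᵥ u2) = S *ᵥ b := by
    rw [mulVec_add, mulVec_mulVec, hcu2, hcdef]; abel
  have hyQA : (Q * A) *ᵥ (xk + Bih *ᵥ u2) = Q *ᵥ b := by
    rw [mulVec_add, mulVec_mulVec, hKu2, add_zero, hxk]
  -- minimality
  have hmin := hxk1min (xk + Bih *ᵥ u2) hySA hyQA
  have hys : xk + Bih *ᵥ u2 - xk = Bih *ᵥ u2 := by abel
  rw [hys] at hmin
  have hquad : ∀ u : Fin n → ℝ, (Bih *ᵥ u) ⬝ᵥ (B *ᵥ (Bih *ᵥ u)) = u ⬝ᵥ u := by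
    intro u
    rw [mulVec_dot, mulVec_mulVec, mulVec_mulVec, hBihT, hBBih, one_mulVec]
  rw [← h1, hquad u1, hquad u2] at hmin
  -- orthogonality
  have hMdiff : (S * A * Bih * P) *ᵥ (u1 - u2) = 0 := by
    rw [mulVec_sub, hMu1, hMu2, sub_self]
  have horth : u2 ⬝ᵥ (u1 - u2) = 0 := by
    nth_rewrite 1 [hu2def]
    rw [mulVec_dot, hMT2, hMdiff, dotProduct_zero]
  have hexp : (u1 - u2) ⬝ᵥ (u1 - u2) = u1 ⬝ᵥ u1 - u2 ⬝ᵥ u2 - 2 * (u2 ⬝ᵥ (u1 - u2)) := by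
    simp only [sub_dotProduct, dotProduct_sub]
    rw [dotProduct_comm u2 u1]
    ring
  have hnonneg : 0 ≤ (u1 - u2) ⬝ᵥ (u1 - u2) :=
    Finset.sum_nonneg fun i _ => mul_self_nonneg _
  have h12 : u1 = u2 := by
    have hle2 : (u1 - u2) ⬝ᵥ (u1 - u2) ≤ 0 := by rw [hexp, horth]; linarith
    have h0 : (u1 - u2) ⬝ᵥ (u1 - u2) = 0 := le_antisymm hle2 hnonneg
    exact sub_eq_zero.mp (dotProduct_self_eq_zero.mp h0)
  -- conclusion
  have hcneg : c = -(S *ᵥ (A *ᵥ xk - b)) := by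
    rw [hcdef, mulVec_sub, mulVec_mulVec]; abel
  have hfinal : xk1 - xk = -((Bih * P * Bih * Aᵀ * Sᵀ * N2 * S) *ᵥ (A *ᵥ xk - b)) := by
    rw [← h1, h12, hu2def, hzdef, mulVec_mulVec, mulVec_mulVec, hcneg, mulVec_neg, mulVec_mulVec]
    have hX : Bih * (P * Bih * Aᵀ * Sᵀ) * N2 * S = Bih * P * Bih * Aᵀ * Sᵀ * N2 * S := by
      simp only [Matrix.mul_assoc]
    rw [hX]
  rw [sub_eq_add_neg, ← hfinal]
  abel
end

section
/- Let A ∈ ℝ^{m×n}, b ∈ ℝ^m with Ax = b consistent, B ∈ ℝ^{n×n} symmetric positive definite, Q ∈ ℝ^{d×m}, P := I − (Q A B^{−1/2})† Q A B^{−1/2}, and let x^0 satisfy QAx^0 = Qb with x* the minimizer of ||x − x^0||_B over {x : Ax = b}. Let {x^k}_{k≥0} be the iterates where x^{k+1} minimizes ||x − x^k||_B subject to S^k A x = S^k b and QAx = Qb, for arbitrary sketching matrices S^k ∈ ℝ^{ℓ×m}. Then for all k ≥ 0, the vector B^{1/2}(x^k − x*) lies in range(P B^{−1/2} Aᵀ).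 -/
open Matrix
open scoped MatrixOrder

/-- Fredholm alternative: a vector orthogonal to `ker A` is in the range of `Aᵀ`. -/
lemma mem_range_transpose_of_perp_ker {m n : ℕ} (A : Matrix (Fin m) (Fin n) ℝ) (v : Fin n → ℝ)
    (h : ∀ w : Fin n → ℝ, A *ᵥ w = 0 → v ⬝ᵥ w = 0) : ∃ u, Aᵀ *ᵥ u = v := by
  let W : Submodule ℝ (EuclideanSpace ℝ (Fin n)) :=
    (LinearMap.range (Aᵀ.mulVecLin)).map (WithLp.linearEquiv 2 ℝ (Fin n → ℝ)).symm.toLinearMap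
  have hv : WithLp.toLp 2 v ∈ Wᗮᗮ := by
    intro z hz
    have hz' : ∀ u : Fin m → ℝ, u ⬝ᵥ (A *ᵥ z.ofLp) = 0 := by
      intro u
      have := hz (WithLp.toLp 2 (Aᵀ *ᵥ u)) ⟨Aᵀ *ᵥ u, ⟨u, rfl⟩, rfl⟩
      rw [dotProduct_mulVec]
      simpa [EuclideanSpace.inner_eq_star_dotProduct, mulVec_transpose, dotProduct, mul_comm] using this
    have hAz : A *ᵥ z.ofLp = 0 := by
      funext i
      simpa using hz' (Pi.single i 1)
    have := h z.ofLp hAz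
    simpa [EuclideanSpace.inner_eq_star_dotProduct, dotProduct, mul_comm] using this
  rw [Submodule.orthogonal_orthogonal] at hv
  obtain ⟨y, ⟨u, rfl⟩, hy⟩ := hv
  exact ⟨u, congrArg WithLp.ofLp hy⟩

/-- Expansion of the quadratic form along a line. -/
lemma quad_expand {n : ℕ} (B : Matrix (Fin n) (Fin n) ℝ) (hsym : Bᵀ = B)
    (w h : Fin n → ℝ) (t : ℝ) :
    (w + t • h) ⬝ᵥ (B *ᵥ (w + t • h)) =
      w ⬝ᵥ (B *ᵥ w) + 2 * t * (h ⬝ᵥ (B *ᵥ w)) + t ^ 2 * (h ⬝ᵥ (B *ᵥ h)) := by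
  have h1 : w ⬝ᵥ (B *ᵥ h) = h ⬝ᵥ (B *ᵥ w) := by
    rw [dotProduct_mulVec, dotProduct_comm]
    congr 1
    rw [← vecMul_transpose, hsym]
  simp only [mulVec_add, mulVec_smul, dotProduct_add, add_dotProduct, dotProduct_smul,
    smul_dotProduct, smul_eq_mul, h1]
  ring

/-- If `0 ≤ 2ta + t²c` for all `t` with `c ≥ 0`, then `a = 0`. -/
lemma real_quad_aux (a c : ℝ) (hc : 0 ≤ c) (h : ∀ t : ℝ, 0 ≤ 2 * t * a + t ^ 2 * c) :
    a = 0 := by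
  by_contra ha
  have hcp : (0:ℝ) < c + 1 := by linarith
  have h1 := h (-a / (c + 1))
  have heq : 2 * (-a / (c + 1)) * a + (-a / (c + 1)) ^ 2 * c
      = -(a ^ 2 * (c + 2)) / (c + 1) ^ 2 := by
    field_simp
    ring
  rw [heq] at h1
  have h2 : 0 < a ^ 2 := by positivity
  have h3 : 0 < a ^ 2 * (c + 2) := by nlinarith
  have h4 : 0 < (c + 1) ^ 2 := by positivity
  have h5 : -(a ^ 2 * (c + 2)) / (c + 1) ^ 2 < 0 :=
    div_neg_of_neg_of_pos (by linarith) h4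
  linarith

/-- First-order optimality along a feasible line. -/
lemma orth_of_min {n : ℕ} (B : Matrix (Fin n) (Fin n) ℝ) (hsym : Bᵀ = B)
    (hc : ∀ z : Fin n → ℝ, 0 ≤ z ⬝ᵥ (B *ᵥ z))
    (w h : Fin n → ℝ)
    (hineq : ∀ t : ℝ, w ⬝ᵥ (B *ᵥ w) ≤ (w + t • h) ⬝ᵥ (B *ᵥ (w + t • h))) :
    h ⬝ᵥ (B *ᵥ w) = 0 := by
  apply real_quad_aux _ _ (hc h)
  intro t
  have key := hineq t
  rw [quad_expand B hsym] at key
  linarith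


/-- invariant subspace property. For the subspace-constrained
sketch-and-project iterates `{x^k}` (with arbitrary sketching matrices `S^k`), the
vector `B^{1/2}(x^k − x*)` lies in `range(P B^{−1/2} Aᵀ)` for all `k ≥ 0`. -/
theorem stmt_2 {m n d l : ℕ}
    (A : Matrix (Fin m) (Fin n) ℝ) (b : Fin m → ℝ)
    (hconsistent : ∃ x, A *ᵥ x = b)
    (B : Matrix (Fin n) (Fin n) ℝ) (hB : B.PosDef)
    (Q : Matrix (Fin d) (Fin m) ℝ)
    -- `Bh = B^{1/2}` and `Bih = B^{-1/2}`
    (Bh : Matrix (Fin n) (Fin n) ℝ) (hBh : Bh = CFC.sqrt B)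
    (Bih : Matrix (Fin n) (Fin n) ℝ) (hBih : Bih = (CFC.sqrt B)⁻¹)
    -- `N1 = (Q A B^{-1/2})†` and `P = I - N1 (Q A B^{-1/2})`
    (N1 : Matrix (Fin n) (Fin d) ℝ) (hN1 : IsMoorePenrose (Q * A * Bih) N1)
    (P : Matrix (Fin n) (Fin n) ℝ) (hP : P = 1 - N1 * (Q * A * Bih))
    -- the arbitrary sketching matrices, one for each iteration
    (Sseq : ℕ → Matrix (Fin l) (Fin m) ℝ)
    -- the iterates: `x 0` satisfies the subspace constraint, and `x (k+1)` is the
    -- minimizer of `‖x - x k‖_B` subject to `S^k A x = S^k b` and `QAx = Qb`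
    (x : ℕ → (Fin n → ℝ))
    (hx0 : (Q * A) *ᵥ x 0 = Q *ᵥ b)
    (hstep : ∀ k : ℕ,
      (Sseq k * A) *ᵥ x (k + 1) = Sseq k *ᵥ b ∧
      (Q * A) *ᵥ x (k + 1) = Q *ᵥ b ∧
      ∀ y : Fin n → ℝ, (Sseq k * A) *ᵥ y = Sseq k *ᵥ b → (Q * A) *ᵥ y = Q *ᵥ b →
        (x (k + 1) - x k) ⬝ᵥ (B *ᵥ (x (k + 1) - x k)) ≤ (y - x k) ⬝ᵥ (B *ᵥ (y - x k)))
    -- `x*` is the minimizer of `‖x - x 0‖_B` over `{x : Ax = b}`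
    (xstar : Fin n → ℝ) (hxstar_sol : A *ᵥ xstar = b)
    (hxstar_min : ∀ y : Fin n → ℝ, A *ᵥ y = b →
      (xstar - x 0) ⬝ᵥ (B *ᵥ (xstar - x 0)) ≤ (y - x 0) ⬝ᵥ (B *ᵥ (y - x 0))) :
    ∀ k : ℕ, ∃ u : Fin m → ℝ, Bh *ᵥ (x k - xstar) = (P * Bih * Aᵀ) *ᵥ u := by
  -- basic symmetric / psd facts
  have hsym : Bᵀ = B := hB.isHermitian.eq
  have hpsd : ∀ z : Fin n → ℝ, 0 ≤ z ⬝ᵥ (B *ᵥ z) := by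
    intro z; simpa using hB.posSemidef.dotProduct_mulVec_nonneg z
  -- square-root facts
  have hBhBh : Bh * Bh = B := by rw [hBh]; exact CFC.sqrt_mul_sqrt_self B hB.posSemidef.nonneg
  have hdetBh : IsUnit Bh.det := by
    have : Bh.det * Bh.det = B.det := by rw [← det_mul, hBhBh]
    have hd : B.det ≠ 0 := ne_of_gt hB.det_pos
    exact isUnit_iff_ne_zero.2 (fun h0 => hd (by rw [← this, h0, zero_mul]))
  have hBih' : Bih = Bh⁻¹ := by rw [hBih, hBh]
  have hIB : Bih * Bh = 1 := by rw [hBih']; exact nonsing_inv_mul _ hdetBh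
  have hBihB : Bih * B = Bh := by
    rw [← hBhBh, ← mul_assoc, hIB, one_mul]
  -- the sketch matrix `M = Q A B^{-1/2}` and the projector
  set M : Matrix (Fin d) (Fin n) ℝ := Q * A * Bih with hM
  have hMBh : M * Bh = Q * A := by
    rw [hM, Matrix.mul_assoc, hIB, Matrix.mul_one]
  have hNN : (N1 * M) * (N1 * M) = N1 * M := by
    have h2 := hN1.2.1
    rw [← Matrix.mul_assoc, h2]
  have hPP : P * P = P := by
    rw [hP]
    have : (1 - N1 * M) * (1 - N1 * M) = 1 - N1 * M - N1 * M + (N1 * M) * (N1 * M) := by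
      noncomm_ring
    rw [this, hNN]; noncomm_ring
  have hPfix : ∀ z : Fin n → ℝ, M *ᵥ z = 0 → P *ᵥ z = z := by
    intro z hz
    rw [hP, sub_mulVec, one_mulVec, ← mulVec_mulVec, hz, mulVec_zero, sub_zero]
  -- membership is preserved under applying P, and under the kernel condition
  have key : ∀ k : ℕ, (Q * A) *ᵥ x k = Q *ᵥ b →
      (∃ w : Fin m → ℝ, Bh *ᵥ (x k - xstar) = (Bih * Aᵀ) *ᵥ w) →
      ∃ u : Fin m → ℝ, Bh *ᵥ (x k - xstar) = (P * Bih * Aᵀ) *ᵥ u := by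
    intro k hk ⟨w, hw⟩
    have hker : M *ᵥ (Bh *ᵥ (x k - xstar)) = 0 := by
      rw [mulVec_mulVec, hMBh, mulVec_sub, hk]
      rw [← mulVec_mulVec, hxstar_sol, sub_self]
    refine ⟨w, ?_⟩
    have := hPfix _ hker
    rw [← this, hw, mulVec_mulVec, ← Matrix.mul_assoc]
  -- step difference lies in range of `Bih * Aᵀ`
  have step_diff : ∀ (y z : Fin n → ℝ),
      (∀ h : Fin n → ℝ, A *ᵥ h = 0 → h ⬝ᵥ (B *ᵥ (y - z)) = 0) →
      ∃ w : Fin m → ℝ, Bh *ᵥ (y - z) = (Bih * Aᵀ) *ᵥ w := by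
    intro y z horth
    obtain ⟨u, hu⟩ := mem_range_transpose_of_perp_ker A (B *ᵥ (y - z)) (by
      intro h hh
      rw [dotProduct_comm]
      exact horth h hh)
    refine ⟨u, ?_⟩
    rw [← mulVec_mulVec, hu, ← hBihB, ← mulVec_mulVec]
  -- main induction
  intro k
  induction k with
  | zero =>
    apply key 0 hx0
    have horth : ∀ h : Fin n → ℝ, A *ᵥ h = 0 → h ⬝ᵥ (B *ᵥ (xstar - x 0)) = 0 := by
      intro h hh
      apply orth_of_min B hsym hpsd
      intro t
      have hfeas : A *ᵥ (xstar + t • h) = b := by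
        rw [mulVec_add, hxstar_sol, mulVec_smul, hh, smul_zero, add_zero]
      have := hxstar_min (xstar + t • h) hfeas
      rwa [add_sub_right_comm] at this
    obtain ⟨w, hw⟩ := step_diff xstar (x 0) horth
    refine ⟨-w, ?_⟩
    have : Bh *ᵥ (x 0 - xstar) = -(Bh *ᵥ (xstar - x 0)) := by
      rw [← mulVec_neg, neg_sub]
    rw [this, hw, ← mulVec_neg]
  | succ k ih =>
    obtain ⟨hS, hQ, hmin⟩ := hstep k
    obtain ⟨u, hu⟩ := ih
    have horth : ∀ h : Fin n → ℝ, A *ᵥ h = 0 → h ⬝ᵥ (B *ᵥ (x (k+1) - x k)) = 0 := by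
      intro h hh
      apply orth_of_min B hsym hpsd
      intro t
      have hfS : (Sseq k * A) *ᵥ (x (k+1) + t • h) = Sseq k *ᵥ b := by
        rw [mulVec_add, hS, mulVec_smul, ← mulVec_mulVec, hh, mulVec_zero, smul_zero, add_zero]
      have hfQ : (Q * A) *ᵥ (x (k+1) + t • h) = Q *ᵥ b := by
        rw [mulVec_add, hQ, mulVec_smul, ← mulVec_mulVec, hh, mulVec_zero, smul_zero, add_zero]
      have := hmin (x (k+1) + t • h) hfS hfQ
      rwa [add_sub_right_comm] at this
    obtain ⟨w, hw⟩ := step_diff (x (k+1)) (x k) horth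
    -- x (k+1) - xstar = (x k - xstar) + (x (k+1) - x k)
    have hsplit : x (k+1) - xstar = (x k - xstar) + (x (k+1) - x k) := by
      abel
    -- Bh(x^{k+1} - x*) = P Bih Aᵀ u + Bih Aᵀ w ; we show it is in range of Bih Aᵀ after P
    have hker : M *ᵥ (Bh *ᵥ (x (k+1) - xstar)) = 0 := by
      rw [mulVec_mulVec, hMBh, mulVec_sub, hQ, ← mulVec_mulVec, hxstar_sol, sub_self]
    refine ⟨u + w, ?_⟩
    have he : Bh *ᵥ (x (k+1) - xstar) = (P * Bih * Aᵀ) *ᵥ u + (Bih * Aᵀ) *ᵥ w := by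
      rw [hsplit, mulVec_add, hu, hw]
    have hP1 : P * (P * Bih * Aᵀ) = P * Bih * Aᵀ := by
      rw [← Matrix.mul_assoc, ← Matrix.mul_assoc, hPP]
    have hP2 : P * (Bih * Aᵀ) = P * Bih * Aᵀ := (Matrix.mul_assoc P Bih Aᵀ).symm
    calc Bh *ᵥ (x (k+1) - xstar) = P *ᵥ (Bh *ᵥ (x (k+1) - xstar)) := (hPfix _ hker).symm
    _ = P *ᵥ ((P * Bih * Aᵀ) *ᵥ u) + P *ᵥ ((Bih * Aᵀ) *ᵥ w) := by rw [he, mulVec_add]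
    _ = (P * Bih * Aᵀ) *ᵥ u + (P * Bih * Aᵀ) *ᵥ w := by
        rw [mulVec_mulVec, mulVec_mulVec, hP1, hP2]
    _ = (P * Bih * Aᵀ) *ᵥ (u + w) := by rw [← mulVec_add]
end

section
/- Let M, N ∈ ℝ^{ℓ×ℓ} be symmetric positive semidefinite matrices with M ⪯ N (i.e., N − M positive semidefinite) and null(N) ⊆ null(M). Then for every ξ ∈ range(M), ξᵀ M† ξ ≥ ξᵀ N† ξ, where † denotes the Moore–Penrose pseudoinverse. -/
open Matrix

lemma matrix_ext_of_mulVec {l : ℕ} {A B : Matrix (Fin l) (Fin l) ℝ}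
    (h : ∀ y, A *ᵥ y = B *ᵥ y) : A = B := by
  ext i j
  have := congrFun (h (Pi.single j 1)) i
  simpa [Matrix.mulVec_single] using this

/-- pseudoinverse monotonicity. If `M ⪯ N` are psd with
`null(N) ⊆ null(M)`, then `ξᵀ M† ξ ≥ ξᵀ N† ξ` for every `ξ ∈ range(M)`. -/
theorem stmt_5 {l : ℕ}
    (M N : Matrix (Fin l) (Fin l) ℝ)
    (hM : M.PosSemidef) (hN : N.PosSemidef)
    (hMN : (N - M).PosSemidef)
    (hker : ∀ x : Fin l → ℝ, N *ᵥ x = 0 → M *ᵥ x = 0)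
    (Mp Np : Matrix (Fin l) (Fin l) ℝ)
    (hMp : IsMoorePenrose M Mp) (hNp : IsMoorePenrose N Np) :
    ∀ ξ : Fin l → ℝ, (∃ u : Fin l → ℝ, ξ = M *ᵥ u) →
      ξ ⬝ᵥ (Np *ᵥ ξ) ≤ ξ ⬝ᵥ (Mp *ᵥ ξ) := by
  have hMt : Mᵀ = M := by
    have := hM.1
    simpa [Matrix.IsHermitian, Matrix.conjTranspose_eq_transpose_of_trivial] using this
  have hNt : Nᵀ = N := by
    have := hN.1
    simpa [Matrix.IsHermitian, Matrix.conjTranspose_eq_transpose_of_trivial] using this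
  -- N * (N * Np) = N
  have hNNNp : N * (N * Np) = N := by
    have h := congrArg Matrix.transpose hNp.1
    rwa [Matrix.transpose_mul, hNp.2.2.1, hNt] at h
  -- M = M * (N * Np)
  have hMP : M * (N * Np) = M := by
    apply matrix_ext_of_mulVec
    intro y
    have h0 : N *ᵥ (y - (N * Np) *ᵥ y) = 0 := by
      rw [Matrix.mulVec_sub, Matrix.mulVec_mulVec, hNNNp, sub_self]
    have h1 := hker _ h0
    rw [Matrix.mulVec_sub, Matrix.mulVec_mulVec, sub_eq_zero] at h1
    exact h1.symm
  have hPM : (N * Np) * M = M := by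
    have := congrArg Matrix.transpose hMP
    rwa [Matrix.transpose_mul, hNp.2.2.1, hMt] at this
  rintro ξ ⟨u, rfl⟩
  set ξ : Fin l → ℝ := M *ᵥ u with hξ
  set w : Fin l → ℝ := Mp *ᵥ ξ with hw
  set x : Fin l → ℝ := Np *ᵥ ξ with hx
  have hMw : M *ᵥ w = ξ := by
    rw [hw, hξ, Matrix.mulVec_mulVec, Matrix.mulVec_mulVec, hMp.1]
  have hNx : N *ᵥ x = ξ := by
    rw [hx, hξ, Matrix.mulVec_mulVec, Matrix.mulVec_mulVec, hPM]
  have key1 : 0 ≤ (x - w) ⬝ᵥ (M *ᵥ (x - w)) := by simpa using hM.dotProduct_mulVec_nonneg (x - w)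
  have key2 : 0 ≤ x ⬝ᵥ ((N - M) *ᵥ x) := by simpa using hMN.dotProduct_mulVec_nonneg x
  -- expand
  have e1 : (x - w) ⬝ᵥ (M *ᵥ (x - w)) =
      x ⬝ᵥ (M *ᵥ x) - x ⬝ᵥ (M *ᵥ w) - w ⬝ᵥ (M *ᵥ x) + w ⬝ᵥ (M *ᵥ w) := by
    rw [Matrix.mulVec_sub, sub_dotProduct, dotProduct_sub,
      dotProduct_sub]
    ring
  have e2 : x ⬝ᵥ ((N - M) *ᵥ x) = x ⬝ᵥ (N *ᵥ x) - x ⬝ᵥ (M *ᵥ x) := by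
    rw [Matrix.sub_mulVec, dotProduct_sub]
  have hwM : ∀ z, w ⬝ᵥ (M *ᵥ z) = ξ ⬝ᵥ z := by
    intro z
    rw [Matrix.dotProduct_mulVec, ← Matrix.mulVec_transpose, hMt, hMw]
  have hxNx : x ⬝ᵥ (N *ᵥ x) = x ⬝ᵥ ξ := by rw [hNx]
  have hxMw : x ⬝ᵥ (M *ᵥ w) = x ⬝ᵥ ξ := by rw [hMw]
  have hgoal1 : ξ ⬝ᵥ (Np *ᵥ ξ) = x ⬝ᵥ ξ := dotProduct_comm _ _
  have hgoal2 : ξ ⬝ᵥ (Mp *ᵥ ξ) = ξ ⬝ᵥ w := rfl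
  rw [hgoal1, hgoal2]
  have h3 := hwM x
  have h4 := hwM w
  have hc : ξ ⬝ᵥ x = x ⬝ᵥ ξ := dotProduct_comm _ _
  nlinarith [key1, key2, e1, e2]
end

section
/- Let A ∈ ℝ^{m×n}, b ∈ ℝ^m with Ax = b consistent, B ∈ ℝ^{n×n} symmetric positive definite, Q ∈ ℝ^{d×m}, P := I − (Q A B^{−1/2})† Q A B^{−1/2}, and x* the minimizer of ||x − x^0||_B over {x : Ax = b}, where x^0 satisfies QAx^0 = Qb. Let S_ℓ ∈ ℝ^{ℓ×m} be a random matrix whose ℓ rows s_1, …, s_ℓ ∈ ℝ^m are i.i.d. draws from a finitely supported distribution, and let Z₁ := (s₁ᵀ A B^{−1/2} P)† s₁ᵀ A B^{−1/2} P be the orthogonal projector onto range(P B^{−1/2} Aᵀ s₁). Assume null(E[Z₁]) = null(A B^{−1/2} P). Then the subspace-constrained sketch-and-project iterates {x^k} with sketching matrix S_ℓ (a fresh independent draw each iteration) satisfy E||x^k − x*||_B² ≤ (1 − λmin⁺(E[Z₁]))^{ℓk} · ||x^0 − x*||_B². -/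
open Matrix

/-- The smallest nonzero eigenvalue of a square real matrix
(with junk value `sInf ∅ = 0` if every eigenvalue is zero). -/
noncomputable def lamMinPos {n : ℕ} (M : Matrix (Fin n) (Fin n) ℝ) : ℝ :=
  sInf {μ : ℝ | μ ≠ 0 ∧ ∃ v : Fin n → ℝ, v ≠ 0 ∧ M *ᵥ v = μ • v}

/-- The trajectory of an iterative method: `traj step x0 k ω` is the `k`-th iterate
obtained from `x0` using the random draws `ω 0, …, ω (k-1)`. -/
def traj {V I : Type*} (step : I → V → V) (x0 : V) : (k : ℕ) → (Fin k → I) → V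
  | 0, _ => x0
  | k + 1, ω => step (ω (Fin.last k)) (traj step x0 k (Fin.init ω))

lemma dp_self_nonneg {n : ℕ} (v : Fin n → ℝ) : 0 ≤ v ⬝ᵥ v :=
  Finset.sum_nonneg fun i _ => mul_self_nonneg (v i)

lemma quad_zero (bb c : ℝ) (hc : 0 ≤ c) (h : ∀ t : ℝ, 0 ≤ c * t^2 + 2 * bb * t) : bb = 0 := by
  rcases hc.eq_or_lt with h0 | h0
  · have := h (-bb); nlinarith [sq_nonneg bb]
  · have h1 := h (-bb / c)
    have key : c * (-bb/c)^2 + 2*bb*(-bb/c) = -(bb^2/c) := by field_simp; ring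
    rw [key] at h1
    have h2 : 0 ≤ bb^2/c := div_nonneg (sq_nonneg bb) h0.le
    have h3 : bb^2/c = 0 := le_antisymm (by linarith) h2
    field_simp at h3
    simpa using h3

lemma dotProduct_sum' {n : ℕ} {ι : Type*} (s : Finset ι) (f : ι → (Fin n → ℝ)) (v : Fin n → ℝ) :
    v ⬝ᵥ (∑ i ∈ s, f i) = ∑ i ∈ s, v ⬝ᵥ f i := by
  simp only [dotProduct, Finset.sum_apply, Finset.mul_sum]
  exact Finset.sum_comm

lemma sum_dotProduct' {n : ℕ} {ι : Type*} (s : Finset ι) (f : ι → (Fin n → ℝ)) (v : Fin n → ℝ) :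
    (∑ i ∈ s, f i) ⬝ᵥ v = ∑ i ∈ s, f i ⬝ᵥ v := by
  simp only [dotProduct, Finset.sum_apply, Finset.sum_mul]
  exact Finset.sum_comm

lemma mulVec_sum' {n : ℕ} {ι : Type*} (s : Finset ι) (M : Matrix (Fin n) (Fin n) ℝ)
    (f : ι → (Fin n → ℝ)) : M *ᵥ (∑ i ∈ s, f i) = ∑ i ∈ s, M *ᵥ f i := by
  simpa only [mulVecLin_apply] using map_sum M.mulVecLin f s

lemma sumMat_mulVec {n : ℕ} {ι : Type*} (s : Finset ι) (f : ι → Matrix (Fin n) (Fin n) ℝ)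
    (v : Fin n → ℝ) : (∑ i ∈ s, f i) *ᵥ v = ∑ i ∈ s, f i *ᵥ v := by
  classical
  induction s using Finset.induction_on with
  | empty => simp
  | insert _ _ h ih => rw [Finset.sum_insert h, Finset.sum_insert h, add_mulVec, ih]

lemma dp_shift {n : ℕ} (M : Matrix (Fin n) (Fin n) ℝ) (hM : Mᵀ = M) (x y : Fin n → ℝ) :
    x ⬝ᵥ (M *ᵥ y) = (M *ᵥ x) ⬝ᵥ y := by
  have h : x ᵥ* M = M *ᵥ x := by rw [← hM, vecMul_transpose, hM]
  rw [dotProduct_mulVec, h]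

lemma dp_symm {n : ℕ} (M : Matrix (Fin n) (Fin n) ℝ) (hM : Mᵀ = M) (x y : Fin n → ℝ) :
    x ⬝ᵥ (M *ᵥ y) = y ⬝ᵥ (M *ᵥ x) := by
  rw [dp_shift M hM, dotProduct_comm]

lemma lamMinPos_bddBelow {n : ℕ} {M : Matrix (Fin n) (Fin n) ℝ} (hM : M.PosSemidef) :
    0 ∈ lowerBounds {μ : ℝ | μ ≠ 0 ∧ ∃ v : Fin n → ℝ, v ≠ 0 ∧ M *ᵥ v = μ • v} := by
  rintro μ ⟨hμ, z, hz, hzM⟩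
  have h1 : 0 ≤ z ⬝ᵥ (M *ᵥ z) := by simpa using hM.dotProduct_mulVec_nonneg z
  rw [hzM] at h1
  have h2 : z ⬝ᵥ (μ • z) = μ * (z ⬝ᵥ z) := by simp [smul_eq_mul]
  have h3 : 0 < z ⬝ᵥ z :=
    (dp_self_nonneg z).lt_of_ne fun h => hz (dotProduct_self_eq_zero.1 h.symm)
  nlinarith

lemma lamMinPos_le_one {n : ℕ} {M : Matrix (Fin n) (Fin n) ℝ} (hM : M.PosSemidef)
    (h1M : ∀ v : Fin n → ℝ, v ⬝ᵥ (M *ᵥ v) ≤ v ⬝ᵥ v) : lamMinPos M ≤ 1 := by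
  rcases Set.eq_empty_or_nonempty
      {μ : ℝ | μ ≠ 0 ∧ ∃ v : Fin n → ℝ, v ≠ 0 ∧ M *ᵥ v = μ • v} with he | ⟨μ, hμ⟩
  · rw [lamMinPos, he, Real.sInf_empty]; norm_num
  · refine csInf_le_of_le ⟨0, lamMinPos_bddBelow hM⟩ hμ ?_
    obtain ⟨hμ0, z, hz, hzM⟩ := hμ
    have h1 := h1M z
    rw [hzM] at h1
    have h2 : z ⬝ᵥ (μ • z) = μ * (z ⬝ᵥ z) := by simp [smul_eq_mul]
    have h3 : 0 < z ⬝ᵥ z :=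
      (dp_self_nonneg z).lt_of_ne fun h => hz (dotProduct_self_eq_zero.1 h.symm)
    nlinarith

lemma lamMinPos_quadform_le {n : ℕ} {M : Matrix (Fin n) (Fin n) ℝ}
    (hM : M.PosSemidef) (v : Fin n → ℝ)
    (hv : ∀ z : Fin n → ℝ, M *ᵥ z = 0 → v ⬝ᵥ z = 0) :
    lamMinPos M * (v ⬝ᵥ v) ≤ v ⬝ᵥ (M *ᵥ v) := by
  have hH : M.IsHermitian := hM.1
  set B := hH.eigenvectorBasis with hBdef
  set lam := hH.eigenvalues with hlamdef
  set bv : Fin n → (Fin n → ℝ) := fun i => B i with hbv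
  set c : Fin n → ℝ := fun i => bv i ⬝ᵥ v with hc
  have heig : ∀ i, M *ᵥ bv i = lam i • bv i := fun i => hH.mulVec_eigenvectorBasis i
  have horth : ∀ i j, bv i ⬝ᵥ bv j = if i = j then 1 else 0 := by
    intro i j
    have h0 := B.orthonormal
    rw [orthonormal_iff_ite] at h0
    have h := h0 i j
    simpa [hbv, PiLp.inner_apply, RCLike.inner_apply, dotProduct, mul_comm] using h
  have h2 : ∀ i, (inner ℝ (B i) (WithLp.toLp 2 v : EuclideanSpace ℝ (Fin n)) : ℝ) = c i := by
    intro i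
    simp [PiLp.inner_apply, RCLike.inner_apply, hc, hbv, dotProduct, mul_comm]
  have hrepr : ∑ i, c i • bv i = v := by
    have h := congrArg WithLp.ofLp (B.sum_repr' (WithLp.toLp 2 v : EuclideanSpace ℝ (Fin n)))
    simp only [h2] at h
    simpa [hbv] using h
  have hkey : ∀ d : Fin n → ℝ,
      v ⬝ᵥ (∑ i, d i • bv i) = ∑ i, c i * d i := by
    intro d
    conv_lhs => rw [← hrepr]
    rw [sum_dotProduct']
    refine Finset.sum_congr rfl fun j _ => ?_
    rw [smul_dotProduct, dotProduct_sum']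
    have hterm : ∀ i, (bv j) ⬝ᵥ (d i • bv i) = if j = i then d i else 0 := by
      intro i; rw [dotProduct_smul, horth, smul_eq_mul]; split <;> ring
    rw [Finset.sum_congr rfl fun i _ => hterm i, Finset.sum_ite_eq]
    simp [smul_eq_mul]
  have hMv : M *ᵥ v = ∑ i, (lam i) • (c i • bv i) := by
    conv_lhs => rw [← hrepr]
    rw [mulVec_sum']
    refine Finset.sum_congr rfl fun i _ => ?_
    rw [mulVec_smul, heig, smul_comm]
  have hvMv : v ⬝ᵥ (M *ᵥ v) = ∑ i, lam i * c i ^ 2 := by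
    rw [hMv, show (∑ i, (lam i) • (c i • bv i)) = ∑ i, (lam i * c i) • bv i from
      Finset.sum_congr rfl fun i _ => by rw [smul_smul], hkey]
    refine Finset.sum_congr rfl fun i _ => by ring
  have hvv : v ⬝ᵥ v = ∑ i, c i ^ 2 := by
    conv_lhs => rw [show (v ⬝ᵥ v) = v ⬝ᵥ (∑ i, c i • bv i) from by rw [hrepr]]
    rw [hkey]
    exact Finset.sum_congr rfl fun i _ => by ring
  have hzero : ∀ i, lam i = 0 → c i = 0 := by
    intro i hi
    have hbz : M *ᵥ bv i = 0 := by rw [heig, hi, zero_smul]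
    have := hv (bv i) hbz
    rw [hc]; simpa [dotProduct_comm] using this
  have hmem : ∀ i, lam i ≠ 0 → lamMinPos M ≤ lam i := by
    intro i hi
    refine csInf_le ⟨0, lamMinPos_bddBelow hM⟩ ⟨hi, bv i, ?_, heig i⟩
    intro h0
    have := horth i i
    rw [h0] at this
    simp at this
  rw [hvMv, hvv, Finset.mul_sum]
  refine Finset.sum_le_sum fun i _ => ?_
  rcases eq_or_ne (lam i) 0 with h | h
  · rw [hzero i h, h]; ring_nf; exact le_refl 0
  · exact mul_le_mul_of_nonneg_right (hmem i h) (sq_nonneg _)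

lemma min_orthogonal {n : ℕ} (Bm : Matrix (Fin n) (Fin n) ℝ) (hpsd : Bm.PosSemidef)
    (hs : Bmᵀ = Bm) (e dd : Fin n → ℝ)
    (h : ∀ t : ℝ, e ⬝ᵥ (Bm *ᵥ e) ≤ (e + t • dd) ⬝ᵥ (Bm *ᵥ (e + t • dd))) :
    dd ⬝ᵥ (Bm *ᵥ e) = 0 := by
  apply quad_zero (dd ⬝ᵥ (Bm *ᵥ e)) (dd ⬝ᵥ (Bm *ᵥ dd)) (by simpa using hpsd.dotProduct_mulVec_nonneg dd)
  intro t
  have hexp : (e + t • dd) ⬝ᵥ (Bm *ᵥ (e + t • dd)) =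
      e ⬝ᵥ (Bm *ᵥ e) + ((dd ⬝ᵥ (Bm *ᵥ dd)) * t^2 + 2 * (dd ⬝ᵥ (Bm *ᵥ e)) * t) := by
    rw [mulVec_add, mulVec_smul]
    rw [dotProduct_add, add_dotProduct, add_dotProduct, dotProduct_smul, smul_dotProduct,
      smul_dotProduct, dotProduct_smul, dp_symm Bm hs e dd]
    simp only [smul_eq_mul]
    ring
  have := h t
  rw [hexp] at this
  linarith

def snocEquiv (β : Type*) (k : ℕ) : ((Fin k → β) × β) ≃ (Fin (k+1) → β) where
  toFun p := Fin.snoc p.1 p.2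
  invFun ω := (Fin.init ω, ω (Fin.last k))
  left_inv p := by simp
  right_inv ω := by simp

lemma sum_split {β : Type*} [Fintype β] (k : ℕ) (f : (Fin (k+1) → β) → ℝ) :
    ∑ ω : Fin (k+1) → β, f ω = ∑ ω : Fin k → β, ∑ c : β, f (Fin.snoc ω c) := by
  rw [← Equiv.sum_comp (snocEquiv β k) f, Fintype.sum_prod_type]
  rfl

lemma traj_snoc {V I : Type*} (step : I → V → V) (x0 : V) (k : ℕ) (ω : Fin k → I) (c : I) :
    traj step x0 (k+1) (Fin.snoc ω c) = step c (traj step x0 k ω) := by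
  simp [traj]

lemma traj_succ {V I : Type*} (step : I → V → V) (x0 : V) (k : ℕ) (ω : Fin (k+1) → I) :
    traj step x0 (k+1) ω = step (ω (Fin.last k)) (traj step x0 k (Fin.init ω)) := rfl

lemma prod_comp_snoc {β : Type*} (k : ℕ) (g : β → ℝ) (ω : Fin k → β) (c : β) :
    ∏ i : Fin (k+1), g ((Fin.snoc ω c : Fin (k+1) → β) i) = (∏ i : Fin k, g (ω i)) * g c := by
  have h : ∀ i : Fin (k+1), g ((Fin.snoc ω c : Fin (k+1) → β) i)
      = (Fin.snoc (g ∘ ω) (g c) : Fin (k+1) → ℝ) i := by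
    intro i
    induction i using Fin.lastCases with
    | last => simp
    | cast j => simp
  rw [Finset.prod_congr rfl fun i _ => h i]
  simpa using Fin.prod_snoc (g c) (g ∘ ω)

/-- block size and convergence rate. If the sketching matrix `S_ℓ`
has `ℓ` i.i.d. rows drawn from a finitely supported distribution (weights `w i` on
vectors `svec i`), `Z₁ = (s₁ᵀ A B^{−1/2} P)† s₁ᵀ A B^{−1/2} P`, and
`null(E[Z₁]) = null(A B^{−1/2} P)`, then the subspace-constrained sketch-and-project
iterates satisfy `E‖x^k − x*‖_B² ≤ (1 − λmin⁺(E[Z₁]))^{ℓk} ‖x^0 − x*‖_B²`. -/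
theorem stmt_7 {m n d l N : ℕ}
    (A : Matrix (Fin m) (Fin n) ℝ) (b : Fin m → ℝ)
    (hconsistent : ∃ x, A *ᵥ x = b)
    (B : Matrix (Fin n) (Fin n) ℝ) (hB : B.PosDef)
    (Q : Matrix (Fin d) (Fin m) ℝ)
    (Bih : Matrix (Fin n) (Fin n) ℝ) (hBih : Bih = ((hB.posSemidef.1.eigenvectorUnitary : Matrix (Fin n) (Fin n) ℝ) *
      diagonal (fun i => Real.sqrt (hB.posSemidef.1.eigenvalues i)) *
      (star (hB.posSemidef.1.eigenvectorUnitary : Matrix (Fin n) (Fin n) ℝ)))⁻¹)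
    (N1 : Matrix (Fin n) (Fin d) ℝ) (hN1 : IsMoorePenrose (Q * A * Bih) N1)
    (P : Matrix (Fin n) (Fin n) ℝ) (hP : P = 1 - N1 * (Q * A * Bih))
    -- the finitely supported distribution of the i.i.d. rows `s₁, …, s_ℓ`
    (w : Fin N → ℝ) (hw : ∀ i, 0 ≤ w i) (hw1 : ∑ i, w i = 1)
    (svec : Fin N → (Fin m → ℝ))
    -- the row vector `R i = s_iᵀ A B^{-1/2} P`, its pseudoinverse `Rp i`, and the
    -- rank-one projector `Z1 i = (R i)† (R i)` onto `range(P B^{-1/2} Aᵀ s_i)`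
    (R : Fin N → Matrix (Fin 1) (Fin n) ℝ)
    (hR : ∀ i, R i = Matrix.of fun _ j => (svec i ᵥ* (A * Bih * P)) j)
    (Rp : Fin N → Matrix (Fin n) (Fin 1) ℝ)
    (hRp : ∀ i, IsMoorePenrose (R i) (Rp i))
    (Z1 : Fin N → Matrix (Fin n) (Fin n) ℝ)
    (hZ1 : ∀ i, Z1 i = Rp i * R i)
    -- the expected projector `EZ1 = E[Z₁]`
    (EZ1 : Matrix (Fin n) (Fin n) ℝ) (hEZ1 : EZ1 = ∑ i, w i • Z1 i)
    -- exactness condition: `null(E[Z₁]) = null(A B^{-1/2} P)`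
    (hexact : ∀ v : Fin n → ℝ, EZ1 *ᵥ v = 0 ↔ (A * Bih * P) *ᵥ v = 0)
    -- the initial iterate satisfies `Q A x0 = Q b`
    (x0 : Fin n → ℝ) (hx0 : (Q * A) *ᵥ x0 = Q *ᵥ b)
    -- `x*` is the minimizer of `‖x - x0‖_B` over `{x : Ax = b}`
    (xstar : Fin n → ℝ) (hxstar_sol : A *ᵥ xstar = b)
    (hxstar_min : ∀ y : Fin n → ℝ, A *ᵥ y = b →
      (xstar - x0) ⬝ᵥ (B *ᵥ (xstar - x0)) ≤ (y - x0) ⬝ᵥ (B *ᵥ (y - x0)))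
    -- one step of the method: a draw `c : Fin l → Fin N` gives the sketching matrix
    -- `S_ℓ` with rows `svec (c 0), …, svec (c (l-1))`; `step c x` minimizes `‖· - x‖_B`
    -- subject to `S_ℓ A x = S_ℓ b` and `Q A x = Q b`
    (step : (Fin l → Fin N) → (Fin n → ℝ) → (Fin n → ℝ))
    (hstep : ∀ (c : Fin l → Fin N) (x : Fin n → ℝ), (Q * A) *ᵥ x = Q *ᵥ b →
      ((Matrix.of fun t j => svec (c t) j) * A) *ᵥ step c x =
          (Matrix.of fun t j => svec (c t) j) *ᵥ b ∧
      (Q * A) *ᵥ step c x = Q *ᵥ b ∧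
      ∀ y : Fin n → ℝ,
        ((Matrix.of fun t j => svec (c t) j) * A) *ᵥ y =
            (Matrix.of fun t j => svec (c t) j) *ᵥ b →
        (Q * A) *ᵥ y = Q *ᵥ b →
        (step c x - x) ⬝ᵥ (B *ᵥ (step c x - x)) ≤ (y - x) ⬝ᵥ (B *ᵥ (y - x))) :
    ∀ k : ℕ,
      ∑ ω : Fin k → (Fin l → Fin N), (∏ i, ∏ t, w (ω i t)) *
          ((traj step x0 k ω - xstar) ⬝ᵥ (B *ᵥ (traj step x0 k ω - xstar))) ≤
        (1 - lamMinPos EZ1) ^ (l * k) * ((x0 - xstar) ⬝ᵥ (B *ᵥ (x0 - xstar))) := by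
  classical
  -- square root facts
  set C : Matrix (Fin n) (Fin n) ℝ := ((hB.posSemidef.1.eigenvectorUnitary : Matrix (Fin n) (Fin n) ℝ) *
      diagonal (fun i => Real.sqrt (hB.posSemidef.1.eigenvalues i)) *
      (star (hB.posSemidef.1.eigenvectorUnitary : Matrix (Fin n) (Fin n) ℝ))) with hCdef
  have hCsq : C * C = B := by
    have hUU : star (hB.posSemidef.1.eigenvectorUnitary : Matrix (Fin n) (Fin n) ℝ) *
        (hB.posSemidef.1.eigenvectorUnitary : Matrix (Fin n) (Fin n) ℝ) = 1 :=
      Unitary.coe_star_mul_self _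
    have hspec := hB.posSemidef.1.spectral_theorem
    rw [Unitary.conjStarAlgAut_apply] at hspec
    conv_rhs => rw [hspec]
    rw [hCdef]
    simp only [Matrix.mul_assoc]
    rw [← Matrix.mul_assoc _ _ (diagonal _ * _), hUU, Matrix.one_mul, ← Matrix.mul_assoc (diagonal _),
      diagonal_mul_diagonal]
    congr 3
    funext i
    simp only [Function.comp_apply, RCLike.ofReal_real_eq_id, id]
    exact Real.mul_self_sqrt (hB.posSemidef.eigenvalues_nonneg i)
  have hCsymm : Cᵀ = C := by
    rw [hCdef]
    simp only [star_eq_conjTranspose, conjTranspose_eq_transpose_of_trivial, transpose_mul,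
      transpose_transpose, diagonal_transpose, Matrix.mul_assoc]
  have hBsymm : Bᵀ = B := by
    rw [← conjTranspose_eq_transpose_of_trivial]; exact hB.1
  have hdetC : IsUnit C.det := by
    have hdet : C.det * C.det = B.det := by rw [← det_mul, hCsq]
    have hBpos : (0:ℝ) < B.det := hB.det_pos
    refine isUnit_iff_ne_zero.2 fun h => ?_
    rw [h, mul_zero] at hdet
    rw [← hdet] at hBpos
    exact lt_irrefl 0 hBpos
  have hBihC : Bih * C = 1 := by rw [hBih]; exact nonsing_inv_mul _ hdetC
  have hCBih : C * Bih = 1 := by rw [hBih]; exact mul_nonsing_inv _ hdetC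
  have hCBihv : ∀ v : Fin n → ℝ, C *ᵥ (Bih *ᵥ v) = v := by
    intro v; rw [mulVec_mulVec, hCBih, one_mulVec]
  have hnormC : ∀ y : Fin n → ℝ, y ⬝ᵥ (B *ᵥ y) = (C *ᵥ y) ⬝ᵥ (C *ᵥ y) := by
    intro y
    conv_lhs => rw [← hCsq, ← mulVec_mulVec]
    rw [dp_shift C hCsymm]
  -- Penrose facts
  have hN1M0symm : (N1 * (Q * A * Bih))ᵀ = N1 * (Q * A * Bih) := hN1.2.2.2
  have hPz : ∀ z : Fin n → ℝ, (Q * A * Bih) *ᵥ z = 0 → P *ᵥ z = z := by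
    intro z hz
    rw [hP, sub_mulVec, one_mulVec, ← mulVec_mulVec, hz, mulVec_zero, sub_zero]
  -- Z1 facts
  have hZsymm : ∀ i, (Z1 i)ᵀ = Z1 i := fun i => by rw [hZ1 i]; exact (hRp i).2.2.2
  have hZmul : ∀ i, Z1 i * Z1 i = Z1 i := by
    intro i
    rw [hZ1 i, Matrix.mul_assoc, ← Matrix.mul_assoc (R i) (Rp i) (R i), (hRp i).1]
  have hZidemv : ∀ i (v : Fin n → ℝ), Z1 i *ᵥ (Z1 i *ᵥ v) = Z1 i *ᵥ v := by
    intro i v; rw [mulVec_mulVec, hZmul i]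
  have hZquad : ∀ i (v : Fin n → ℝ), (Z1 i *ᵥ v) ⬝ᵥ (Z1 i *ᵥ v) = v ⬝ᵥ (Z1 i *ᵥ v) := by
    intro i v
    rw [← dp_shift (Z1 i) (hZsymm i) v (Z1 i *ᵥ v), hZidemv]
  have hgnorm : ∀ i (v : Fin n → ℝ),
      (v - Z1 i *ᵥ v) ⬝ᵥ (v - Z1 i *ᵥ v) = v ⬝ᵥ v - v ⬝ᵥ (Z1 i *ᵥ v) := by
    intro i v
    rw [sub_dotProduct, dotProduct_sub, dotProduct_sub, hZquad i v,
      dotProduct_comm (Z1 i *ᵥ v) v]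
    ring
  -- EZ1 facts
  have hEmulv : ∀ v : Fin n → ℝ, EZ1 *ᵥ v = ∑ i, w i • (Z1 i *ᵥ v) := by
    intro v
    rw [hEZ1, sumMat_mulVec]
    exact Finset.sum_congr rfl fun i _ => smul_mulVec (w i) (Z1 i) v
  have hEquad : ∀ v : Fin n → ℝ, v ⬝ᵥ (EZ1 *ᵥ v) = ∑ i, w i * (v ⬝ᵥ (Z1 i *ᵥ v)) := by
    intro v
    rw [hEmulv, dotProduct_sum']
    exact Finset.sum_congr rfl fun i _ => by rw [dotProduct_smul, smul_eq_mul]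
  have hEsymm : EZ1ᵀ = EZ1 := by
    rw [hEZ1, transpose_sum]
    exact Finset.sum_congr rfl fun i _ => by rw [transpose_smul, hZsymm]
  have hEpsd : EZ1.PosSemidef := by
    refine PosSemidef.of_dotProduct_mulVec_nonneg ?_ ?_
    · rw [Matrix.IsHermitian, conjTranspose_eq_transpose_of_trivial]; exact hEsymm
    · intro v
      have hsv : star v = v := by funext j; exact star_trivial (v j)
      rw [hsv, hEquad]
      refine Finset.sum_nonneg fun i _ => mul_nonneg (hw i) ?_
      rw [← hZquad i v]
      exact dp_self_nonneg _
  have hEquad_le : ∀ v : Fin n → ℝ, v ⬝ᵥ (EZ1 *ᵥ v) ≤ v ⬝ᵥ v := by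
    intro v
    have h1 : ∑ i, w i * ((v - Z1 i *ᵥ v) ⬝ᵥ (v - Z1 i *ᵥ v)) = v ⬝ᵥ v - v ⬝ᵥ (EZ1 *ᵥ v) := by
      calc ∑ i, w i * ((v - Z1 i *ᵥ v) ⬝ᵥ (v - Z1 i *ᵥ v))
          = ∑ i, (w i * (v ⬝ᵥ v) - w i * (v ⬝ᵥ (Z1 i *ᵥ v))) :=
            Finset.sum_congr rfl fun i _ => by rw [hgnorm i v]; ring
        _ = (∑ i, w i) * (v ⬝ᵥ v) - ∑ i, w i * (v ⬝ᵥ (Z1 i *ᵥ v)) := by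
            rw [Finset.sum_sub_distrib, Finset.sum_mul]
        _ = v ⬝ᵥ v - v ⬝ᵥ (EZ1 *ᵥ v) := by rw [hw1, one_mul, hEquad]
    have h2 : 0 ≤ ∑ i, w i * ((v - Z1 i *ᵥ v) ⬝ᵥ (v - Z1 i *ᵥ v)) :=
      Finset.sum_nonneg fun i _ => mul_nonneg (hw i) (dp_self_nonneg _)
    linarith
  have hrho : 0 ≤ 1 - lamMinPos EZ1 := by
    have := lamMinPos_le_one hEpsd hEquad_le
    linarith
  -- kill lemmas
  have hRkill : ∀ i (z : Fin n → ℝ), svec i ⬝ᵥ ((A * Bih * P) *ᵥ z) = 0 → R i *ᵥ z = 0 := by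
    intro i z hz
    funext q
    have hq : (R i *ᵥ z) q = (svec i ᵥ* (A * Bih * P)) ⬝ᵥ z := by rw [hR i]; rfl
    rw [hq, ← dotProduct_mulVec, hz]
    rfl
  have hZ1killE : ∀ i (z : Fin n → ℝ), (A * Bih * P) *ᵥ z = 0 → Z1 i *ᵥ z = 0 := by
    intro i z hz
    rw [hZ1 i, ← mulVec_mulVec, hRkill i z (by rw [hz, dotProduct_zero]), mulVec_zero]
  have hZ1killK : ∀ i (z : Fin n → ℝ), (Q * A * Bih) *ᵥ z = 0 →
      svec i ⬝ᵥ ((A * Bih) *ᵥ z) = 0 → Z1 i *ᵥ z = 0 := by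
    intro i z hz1 hz2
    rw [hZ1 i, ← mulVec_mulVec]
    rw [hRkill i z ?_, mulVec_zero]
    rw [← mulVec_mulVec, hPz z hz1]
    exact hz2
  -- row feasibility characterization
  have hrowchar : ∀ (c : Fin l → Fin N) (y : Fin n → ℝ),
      ((Matrix.of fun t j => svec (c t) j) * A) *ᵥ y = (Matrix.of fun t j => svec (c t) j) *ᵥ b ↔
      ∀ t, svec (c t) ⬝ᵥ (A *ᵥ y) = svec (c t) ⬝ᵥ b := by
    intro c y
    rw [← mulVec_mulVec]
    constructor
    · intro h t; exact congrFun h t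
    · intro h; funext t; exact h t
  -- orthogonality of the step displacement
  have hstep_orth : ∀ (c : Fin l → Fin N) (x : Fin n → ℝ), (Q * A) *ᵥ x = Q *ᵥ b →
      ∀ dd : Fin n → ℝ, (Q * A) *ᵥ dd = 0 → (∀ t, svec (c t) ⬝ᵥ (A *ᵥ dd) = 0) →
      dd ⬝ᵥ (B *ᵥ (step c x - x)) = 0 := by
    intro c x hx dd hQd hrow
    obtain ⟨hf1, hf2, hmin⟩ := hstep c x hx
    apply min_orthogonal B hB.posSemidef hBsymm (step c x - x) dd
    intro t
    have hy1 : ((Matrix.of fun t j => svec (c t) j) * A) *ᵥ (step c x + t • dd) =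
        (Matrix.of fun t j => svec (c t) j) *ᵥ b := by
      rw [hrowchar]
      intro t'
      rw [mulVec_add, mulVec_smul, dotProduct_add, dotProduct_smul, hrow t', smul_zero, add_zero]
      exact (hrowchar c _).1 hf1 t'
    have hy2 : (Q * A) *ᵥ (step c x + t • dd) = Q *ᵥ b := by
      rw [mulVec_add, mulVec_smul, hQd, smul_zero, add_zero, hf2]
    have h := hmin (step c x + t • dd) hy1 hy2
    rw [add_sub_right_comm] at h
    exact h
  -- the invariant
  set Good : (Fin n → ℝ) → Prop := fun x =>
    (Q * A) *ᵥ x = Q *ᵥ b ∧ ∀ h : Fin n → ℝ, A *ᵥ h = 0 → (x - xstar) ⬝ᵥ (B *ᵥ h) = 0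
    with hGoodDef
  have hGood0 : Good x0 := by
    refine ⟨hx0, fun h hh => ?_⟩
    have hm : h ⬝ᵥ (B *ᵥ (xstar - x0)) = 0 := by
      apply min_orthogonal B hB.posSemidef hBsymm (xstar - x0) h
      intro t
      have := hxstar_min (xstar + t • h)
        (by rw [mulVec_add, mulVec_smul, hh, smul_zero, add_zero, hxstar_sol])
      rw [add_sub_right_comm] at this
      exact this
    rw [dp_symm B hBsymm, show x0 - xstar = -(xstar - x0) from (neg_sub _ _).symm,
      mulVec_neg, dotProduct_neg, hm, neg_zero]
  have hGoodStep : ∀ (c : Fin l → Fin N) (x : Fin n → ℝ), Good x → Good (step c x) := by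
    intro c x hxG
    obtain ⟨hf1, hf2, hmin⟩ := hstep c x hxG.1
    refine ⟨hf2, fun h hh => ?_⟩
    have h1 : (Q * A) *ᵥ h = 0 := by rw [← mulVec_mulVec, hh, mulVec_zero]
    have h2 : ∀ t, svec (c t) ⬝ᵥ (A *ᵥ h) = 0 := fun t => by rw [hh, dotProduct_zero]
    have h3 := hstep_orth c x hxG.1 h h1 h2
    have h4 : (step c x - x) ⬝ᵥ (B *ᵥ h) = 0 := by rw [dp_symm B hBsymm]; exact h3
    have h5 := hxG.2 h hh
    calc (step c x - xstar) ⬝ᵥ (B *ᵥ h)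
        = ((step c x - x) + (x - xstar)) ⬝ᵥ (B *ᵥ h) := by rw [sub_add_sub_cancel]
      _ = 0 := by rw [add_dotProduct, h4, h5, add_zero]
  -- Good implies the transformed error is orthogonal to null(EZ1)
  have hM0Cv : ∀ y : Fin n → ℝ, (Q * A * Bih) *ᵥ (C *ᵥ y) = (Q * A) *ᵥ y := by
    intro y
    rw [mulVec_mulVec, Matrix.mul_assoc, hBihC, Matrix.mul_one]
  have hInv2 : ∀ x : Fin n → ℝ, Good x → ∀ z : Fin n → ℝ, EZ1 *ᵥ z = 0 →
      (C *ᵥ (x - xstar)) ⬝ᵥ z = 0 := by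
    intro x hxG z hz
    have hzP : (A * Bih * P) *ᵥ z = 0 := (hexact z).1 hz
    have hM0u : (Q * A * Bih) *ᵥ (C *ᵥ (x - xstar)) = 0 := by
      rw [hM0Cv, mulVec_sub, hxG.1, ← mulVec_mulVec, hxstar_sol, sub_self]
    have hsplit : P *ᵥ z + (N1 * (Q * A * Bih)) *ᵥ z = z := by
      rw [hP, sub_mulVec, one_mulVec, sub_add_cancel]
    have hterm2 : (C *ᵥ (x - xstar)) ⬝ᵥ ((N1 * (Q * A * Bih)) *ᵥ z) = 0 := by
      rw [dp_shift (N1 * (Q * A * Bih)) hN1M0symm, ← mulVec_mulVec, hM0u, mulVec_zero,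
        zero_dotProduct]
    have hterm1 : (C *ᵥ (x - xstar)) ⬝ᵥ (P *ᵥ z) = 0 := by
      have hAh : A *ᵥ (Bih *ᵥ (P *ᵥ z)) = 0 := by
        rw [mulVec_mulVec, mulVec_mulVec, hzP]
      have hCh : C *ᵥ (Bih *ᵥ (P *ᵥ z)) = P *ᵥ z := hCBihv _
      calc (C *ᵥ (x - xstar)) ⬝ᵥ (P *ᵥ z)
          = (C *ᵥ (x - xstar)) ⬝ᵥ (C *ᵥ (Bih *ᵥ (P *ᵥ z))) := by rw [hCh]
        _ = (x - xstar) ⬝ᵥ (C *ᵥ (C *ᵥ (Bih *ᵥ (P *ᵥ z)))) := (dp_shift C hCsymm _ _).symm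
        _ = (x - xstar) ⬝ᵥ (B *ᵥ (Bih *ᵥ (P *ᵥ z))) := by rw [mulVec_mulVec, hCsq]
        _ = 0 := hxG.2 _ hAh
    calc (C *ᵥ (x - xstar)) ⬝ᵥ z
        = (C *ᵥ (x - xstar)) ⬝ᵥ (P *ᵥ z + (N1 * (Q * A * Bih)) *ᵥ z) := by rw [hsplit]
      _ = 0 := by rw [dotProduct_add, hterm1, hterm2, add_zero]
  -- the single-row dynamics
  set g : Fin N → (Fin n → ℝ) → (Fin n → ℝ) := fun i v => v - Z1 i *ᵥ v with hgdef
  have hgapp : ∀ i (v : Fin n → ℝ), g i v = v - Z1 i *ᵥ v := fun i v => rfl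
  have hdiff : ∀ (kk : ℕ) (cc : Fin kk → Fin N) (u z : Fin n → ℝ),
      (∀ t, Z1 (cc t) *ᵥ z = 0) → (traj g u kk cc) ⬝ᵥ z = u ⬝ᵥ z := by
    intro kk
    induction kk with
    | zero => intro cc u z _; rfl
    | succ kk ih =>
      intro cc u z hz
      rw [traj_succ, hgapp, sub_dotProduct]
      have h1 : (Z1 (cc (Fin.last kk)) *ᵥ (traj g u kk (Fin.init cc))) ⬝ᵥ z = 0 := by
        rw [← dp_shift (Z1 (cc (Fin.last kk))) (hZsymm _) _ z, hz (Fin.last kk),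
          dotProduct_zero]
      rw [h1, sub_zero]
      exact ih (Fin.init cc) u z fun t => hz t.castSucc
  have hinvg : ∀ i (v : Fin n → ℝ), (∀ z, EZ1 *ᵥ z = 0 → v ⬝ᵥ z = 0) →
      ∀ z, EZ1 *ᵥ z = 0 → (g i v) ⬝ᵥ z = 0 := by
    intro i v hv z hz
    have hzero : Z1 i *ᵥ z = 0 := hZ1killE i z ((hexact z).1 hz)
    have h1 : (Z1 i *ᵥ v) ⬝ᵥ z = 0 := by
      rw [← dp_shift (Z1 i) (hZsymm i) v z, hzero, dotProduct_zero]
    rw [hgapp, sub_dotProduct, hv z hz, h1, sub_zero]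
  have hinvtraj : ∀ (kk : ℕ) (cc : Fin kk → Fin N) (v : Fin n → ℝ),
      (∀ z, EZ1 *ᵥ z = 0 → v ⬝ᵥ z = 0) →
      ∀ z, EZ1 *ᵥ z = 0 → (traj g v kk cc) ⬝ᵥ z = 0 := by
    intro kk
    induction kk with
    | zero => intro cc v hv; exact hv
    | succ kk ih =>
      intro cc v hv
      rw [traj_succ]
      exact hinvg (cc (Fin.last kk)) _ (ih (Fin.init cc) v hv)
  have honestep : ∀ v : Fin n → ℝ, (∀ z, EZ1 *ᵥ z = 0 → v ⬝ᵥ z = 0) →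
      ∑ i, w i * ((g i v) ⬝ᵥ (g i v)) ≤ (1 - lamMinPos EZ1) * (v ⬝ᵥ v) := by
    intro v hv
    have h1 : ∑ i, w i * ((g i v) ⬝ᵥ (g i v)) = v ⬝ᵥ v - v ⬝ᵥ (EZ1 *ᵥ v) := by
      calc ∑ i, w i * ((g i v) ⬝ᵥ (g i v))
          = ∑ i, (w i * (v ⬝ᵥ v) - w i * (v ⬝ᵥ (Z1 i *ᵥ v))) :=
            Finset.sum_congr rfl fun i _ => by rw [hgapp, hgnorm i v]; ring
        _ = (∑ i, w i) * (v ⬝ᵥ v) - ∑ i, w i * (v ⬝ᵥ (Z1 i *ᵥ v)) := by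
            rw [Finset.sum_sub_distrib, Finset.sum_mul]
        _ = v ⬝ᵥ v - v ⬝ᵥ (EZ1 *ᵥ v) := by rw [hw1, one_mul, hEquad]
    have h2 : lamMinPos EZ1 * (v ⬝ᵥ v) ≤ v ⬝ᵥ (EZ1 *ᵥ v) := lamMinPos_quadform_le hEpsd v hv
    have h3 : (1 - lamMinPos EZ1) * (v ⬝ᵥ v) = v ⬝ᵥ v - lamMinPos EZ1 * (v ⬝ᵥ v) := by ring
    rw [h1, h3]
    linarith
  have hseq : ∀ (kk : ℕ) (v : Fin n → ℝ), (∀ z, EZ1 *ᵥ z = 0 → v ⬝ᵥ z = 0) →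
      ∑ cc : Fin kk → Fin N, (∏ t, w (cc t)) * ((traj g v kk cc) ⬝ᵥ (traj g v kk cc)) ≤
      (1 - lamMinPos EZ1)^kk * (v ⬝ᵥ v) := by
    intro kk
    induction kk with
    | zero => intro v hv; simp [traj]
    | succ kk ih =>
      intro v hv
      rw [sum_split]
      have hterm : ∀ (cc : Fin kk → Fin N) (i : Fin N),
          (∏ t : Fin (kk+1), w ((Fin.snoc cc i : Fin (kk+1) → Fin N) t)) *
            ((traj g v (kk+1) (Fin.snoc cc i)) ⬝ᵥ (traj g v (kk+1) (Fin.snoc cc i))) =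
          (∏ t, w (cc t)) * (w i * ((g i (traj g v kk cc)) ⬝ᵥ (g i (traj g v kk cc)))) := by
        intro cc i
        rw [prod_comp_snoc kk w cc i, traj_snoc g v kk cc i]
        ring
      calc ∑ cc : Fin kk → Fin N, ∑ i : Fin N,
            (∏ t : Fin (kk+1), w ((Fin.snoc cc i : Fin (kk+1) → Fin N) t)) *
            ((traj g v (kk+1) (Fin.snoc cc i)) ⬝ᵥ (traj g v (kk+1) (Fin.snoc cc i)))
          = ∑ cc : Fin kk → Fin N, (∏ t, w (cc t)) *
            ∑ i : Fin N, w i * ((g i (traj g v kk cc)) ⬝ᵥ (g i (traj g v kk cc))) := by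
            refine Finset.sum_congr rfl fun cc _ => ?_
            rw [Finset.mul_sum]
            exact Finset.sum_congr rfl fun i _ => hterm cc i
        _ ≤ ∑ cc : Fin kk → Fin N, (∏ t, w (cc t)) *
            ((1 - lamMinPos EZ1) * ((traj g v kk cc) ⬝ᵥ (traj g v kk cc))) := by
            refine Finset.sum_le_sum fun cc _ => ?_
            exact mul_le_mul_of_nonneg_left (honestep _ (hinvtraj kk cc v hv))
              (Finset.prod_nonneg fun t _ => hw _)
        _ = (1 - lamMinPos EZ1) *
            ∑ cc : Fin kk → Fin N, (∏ t, w (cc t)) * ((traj g v kk cc) ⬝ᵥ (traj g v kk cc)) := by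
            rw [Finset.mul_sum]
            exact Finset.sum_congr rfl fun cc _ => by ring
        _ ≤ (1 - lamMinPos EZ1) * ((1 - lamMinPos EZ1)^kk * (v ⬝ᵥ v)) :=
            mul_le_mul_of_nonneg_left (ih v hv) hrho
        _ = (1 - lamMinPos EZ1)^(kk+1) * (v ⬝ᵥ v) := by rw [pow_succ]; ring
  -- the key one-epoch estimate
  have hKEY : ∀ x : Fin n → ℝ, Good x →
      ∑ c : Fin l → Fin N, (∏ t, w (c t)) *
        ((step c x - xstar) ⬝ᵥ (B *ᵥ (step c x - xstar))) ≤
      (1 - lamMinPos EZ1)^l * ((x - xstar) ⬝ᵥ (B *ᵥ (x - xstar))) := by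
    intro x hxG
    have hInvu : ∀ z, EZ1 *ᵥ z = 0 → (C *ᵥ (x - xstar)) ⬝ᵥ z = 0 := hInv2 x hxG
    have hperc : ∀ c : Fin l → Fin N,
        (step c x - xstar) ⬝ᵥ (B *ᵥ (step c x - xstar)) ≤
        (traj g (C *ᵥ (x - xstar)) l c) ⬝ᵥ (traj g (C *ᵥ (x - xstar)) l c) := by
      intro c
      obtain ⟨hf1, hf2, hmin⟩ := hstep c x hxG.1
      set u : Fin n → ℝ := C *ᵥ (x - xstar) with hu
      set u' : Fin n → ℝ := C *ᵥ (step c x - xstar) with hu'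
      set v' : Fin n → ℝ := traj g u l c with hv'
      have hu'M0 : (Q * A * Bih) *ᵥ u' = 0 := by
        rw [hu', hM0Cv, mulVec_sub, hf2, ← mulVec_mulVec, hxstar_sol, sub_self]
      have hABihu' : (A * Bih) *ᵥ u' = A *ᵥ (step c x - xstar) := by
        rw [hu', mulVec_mulVec, Matrix.mul_assoc, hBihC, Matrix.mul_one]
      have hu'row : ∀ t, svec (c t) ⬝ᵥ ((A * Bih) *ᵥ u') = 0 := by
        intro t
        rw [hABihu', mulVec_sub, dotProduct_sub, hxstar_sol, (hrowchar c _).1 hf1 t, sub_self]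
      have horthK : ∀ z : Fin n → ℝ, (Q * A * Bih) *ᵥ z = 0 →
          (∀ t, svec (c t) ⬝ᵥ ((A * Bih) *ᵥ z) = 0) → (u - u') ⬝ᵥ z = 0 := by
        intro z hz1 hz2
        have hQd : (Q * A) *ᵥ (Bih *ᵥ z) = 0 := by
          rw [mulVec_mulVec]
          exact hz1
        have hrowd : ∀ t, svec (c t) ⬝ᵥ (A *ᵥ (Bih *ᵥ z)) = 0 := by
          intro t
          rw [mulVec_mulVec]
          exact hz2 t
        have h3 := hstep_orth c x hxG.1 (Bih *ᵥ z) hQd hrowd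
        have h4 : u - u' = C *ᵥ (x - step c x) := by
          rw [hu, hu', ← mulVec_sub, sub_sub_sub_cancel_right]
        have h5 : C *ᵥ (Bih *ᵥ z) = z := hCBihv z
        calc (u - u') ⬝ᵥ z
            = (C *ᵥ (x - step c x)) ⬝ᵥ z := by rw [h4]
          _ = (x - step c x) ⬝ᵥ (C *ᵥ z) := (dp_shift C hCsymm _ _).symm
          _ = (x - step c x) ⬝ᵥ (B *ᵥ (Bih *ᵥ z)) := by
              conv_lhs => rw [← h5]
              rw [mulVec_mulVec, hCsq]
          _ = (Bih *ᵥ z) ⬝ᵥ (B *ᵥ (x - step c x)) := dp_symm B hBsymm _ _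
          _ = 0 := by
              rw [show x - step c x = -(step c x - x) from (neg_sub _ _).symm, mulVec_neg,
                dotProduct_neg, h3, neg_zero]
      have horthV : ∀ z : Fin n → ℝ, (Q * A * Bih) *ᵥ z = 0 →
          (∀ t, svec (c t) ⬝ᵥ ((A * Bih) *ᵥ z) = 0) → (v' - u) ⬝ᵥ z = 0 := by
        intro z hz1 hz2
        have hk : ∀ t : Fin l, Z1 (c t) *ᵥ z = 0 := fun t => hZ1killK (c t) z hz1 (hz2 t)
        rw [hv', sub_dotProduct, hdiff l c u z hk, sub_self]
      have hvu' : (v' - u') ⬝ᵥ u' = 0 := by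
        have ha := horthK u' hu'M0 hu'row
        have hb := horthV u' hu'M0 hu'row
        have hc : v' - u' = (v' - u) + (u - u') := by abel
        rw [hc, add_dotProduct, ha, hb, add_zero]
      have hBnorm : (step c x - xstar) ⬝ᵥ (B *ᵥ (step c x - xstar)) = u' ⬝ᵥ u' := hnormC _
      have hexpand : v' ⬝ᵥ v' = u' ⬝ᵥ u' + 2 * ((v' - u') ⬝ᵥ u') + (v' - u') ⬝ᵥ (v' - u') := by
        have h : v' = u' + (v' - u') := by abel
        conv_lhs => rw [h]
        rw [add_dotProduct, dotProduct_add, dotProduct_add, dotProduct_comm u' (v' - u')]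
        ring
      have hnn : 0 ≤ (v' - u') ⬝ᵥ (v' - u') := dp_self_nonneg _
      rw [hBnorm]
      rw [hexpand, hvu'] at *
      linarith [hexpand, hvu', hnn]
    calc ∑ c : Fin l → Fin N, (∏ t, w (c t)) *
          ((step c x - xstar) ⬝ᵥ (B *ᵥ (step c x - xstar)))
        ≤ ∑ c : Fin l → Fin N, (∏ t, w (c t)) *
          ((traj g (C *ᵥ (x - xstar)) l c) ⬝ᵥ (traj g (C *ᵥ (x - xstar)) l c)) :=
          Finset.sum_le_sum fun c _ => mul_le_mul_of_nonneg_left (hperc c)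
            (Finset.prod_nonneg fun t _ => hw _)
      _ ≤ (1 - lamMinPos EZ1)^l * ((C *ᵥ (x - xstar)) ⬝ᵥ (C *ᵥ (x - xstar))) := hseq l _ hInvu
      _ = (1 - lamMinPos EZ1)^l * ((x - xstar) ⬝ᵥ (B *ᵥ (x - xstar))) := by rw [← hnormC]
  -- all iterates are Good
  have hGoodTraj : ∀ (kk : ℕ) (ω : Fin kk → (Fin l → Fin N)), Good (traj step x0 kk ω) := by
    intro kk
    induction kk with
    | zero => intro ω; exact hGood0
    | succ kk ih =>
      intro ω
      rw [traj_succ]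
      exact hGoodStep (ω (Fin.last kk)) _ (ih (Fin.init ω))
  -- main induction
  intro k
  induction k with
  | zero =>
    have h0 : (∑ ω : Fin 0 → (Fin l → Fin N), (∏ i, ∏ t, w (ω i t)) *
        ((traj step x0 0 ω - xstar) ⬝ᵥ (B *ᵥ (traj step x0 0 ω - xstar)))) =
        (x0 - xstar) ⬝ᵥ (B *ᵥ (x0 - xstar)) := by
      simp [traj]
    rw [h0, Nat.mul_zero, pow_zero, one_mul]
  | succ k ih =>
    rw [sum_split]
    have hterm : ∀ (ω : Fin k → (Fin l → Fin N)) (c : Fin l → Fin N),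
        (∏ i : Fin (k+1), ∏ t, w ((Fin.snoc ω c : Fin (k+1) → (Fin l → Fin N)) i t)) *
          ((traj step x0 (k+1) (Fin.snoc ω c) - xstar) ⬝ᵥ
            (B *ᵥ (traj step x0 (k+1) (Fin.snoc ω c) - xstar))) =
        (∏ i : Fin k, ∏ t, w (ω i t)) * ((∏ t, w (c t)) *
          ((step c (traj step x0 k ω) - xstar) ⬝ᵥ
            (B *ᵥ (step c (traj step x0 k ω) - xstar)))) := by
      intro ω c
      rw [prod_comp_snoc k (fun cc => ∏ t, w (cc t)) ω c, traj_snoc]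
      ring
    calc ∑ ω : Fin k → (Fin l → Fin N), ∑ c : Fin l → Fin N,
          (∏ i : Fin (k+1), ∏ t, w ((Fin.snoc ω c : Fin (k+1) → (Fin l → Fin N)) i t)) *
          ((traj step x0 (k+1) (Fin.snoc ω c) - xstar) ⬝ᵥ
            (B *ᵥ (traj step x0 (k+1) (Fin.snoc ω c) - xstar)))
        = ∑ ω : Fin k → (Fin l → Fin N), (∏ i : Fin k, ∏ t, w (ω i t)) *
          ∑ c : Fin l → Fin N, (∏ t, w (c t)) *
            ((step c (traj step x0 k ω) - xstar) ⬝ᵥ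
              (B *ᵥ (step c (traj step x0 k ω) - xstar))) := by
          refine Finset.sum_congr rfl fun ω _ => ?_
          rw [Finset.mul_sum]
          exact Finset.sum_congr rfl fun c _ => hterm ω c
      _ ≤ ∑ ω : Fin k → (Fin l → Fin N), (∏ i : Fin k, ∏ t, w (ω i t)) *
          ((1 - lamMinPos EZ1)^l *
            ((traj step x0 k ω - xstar) ⬝ᵥ (B *ᵥ (traj step x0 k ω - xstar)))) := by
          refine Finset.sum_le_sum fun ω _ => ?_
          exact mul_le_mul_of_nonneg_left (hKEY _ (hGoodTraj k ω))
            (Finset.prod_nonneg fun i _ => Finset.prod_nonneg fun t _ => hw _)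
      _ = (1 - lamMinPos EZ1)^l * ∑ ω : Fin k → (Fin l → Fin N),
          (∏ i : Fin k, ∏ t, w (ω i t)) *
            ((traj step x0 k ω - xstar) ⬝ᵥ (B *ᵥ (traj step x0 k ω - xstar))) := by
          rw [Finset.mul_sum]
          exact Finset.sum_congr rfl fun ω _ => by ring
      _ ≤ (1 - lamMinPos EZ1)^l *
          ((1 - lamMinPos EZ1)^(l*k) * ((x0 - xstar) ⬝ᵥ (B *ᵥ (x0 - xstar)))) :=
          mul_le_mul_of_nonneg_left ih (pow_nonneg hrho l)
      _ = (1 - lamMinPos EZ1)^(l*(k+1)) * ((x0 - xstar) ⬝ᵥ (B *ᵥ (x0 - xstar))) := by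
          rw [Nat.mul_succ, pow_add]
          ring
end

section
/- Let A ∈ ℝ^{n×n} be symmetric positive semidefinite, b ∈ ℝ^n with Ax = b consistent, and x* any solution. Fix S ⊆ [n] and let A° := A − A⟨S⟩ with A⟨S⟩ := A_{:,S} (A_{S,S})† A_{S,:}, and assume tr(A°) > 0. Let {x^k}_{k≥0} be the SC-RCD iterates with pivot set S, where each block J = {j_1, …, j_ℓ} consists of ℓ coordinates sampled independently with probabilities A°_{j,j} / tr(A°). Then E||x^k − x*||_A² ≤ (1 − λmin⁺(A°)/tr(A°))^{kℓ} · ||x^0 − x*||_A². -/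
open Matrix

namespace SCRCD
open Matrix

lemma conjT_eq_transpose {m k : Type*} (M : Matrix m k ℝ) : Mᴴ = Mᵀ := by
  ext i j; simp [Matrix.conjTranspose_apply]

lemma mp_unique {k l : Type*} [Fintype k] [Fintype l] {M : Matrix k l ℝ} {X Y : Matrix l k ℝ}
    (hX : IsMoorePenrose M X) (hY : IsMoorePenrose M Y) : X = Y := by
  obtain ⟨hX1, hX2, hX3, hX4⟩ := hX
  obtain ⟨hY1, hY2, hY3, hY4⟩ := hY
  have hMX : M * X = M * Y := by
    calc M * X = (M * Y * M) * X := by rw [hY1]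
    _ = (M * Y) * (M * X) := by simp only [Matrix.mul_assoc]
    _ = (M * Y)ᵀ * (M * X)ᵀ := by rw [hY3, hX3]
    _ = Yᵀ * (M * X * M)ᵀ := by simp only [Matrix.transpose_mul, Matrix.mul_assoc]
    _ = Yᵀ * Mᵀ := by rw [hX1]
    _ = (M * Y)ᵀ := (Matrix.transpose_mul M Y).symm
    _ = M * Y := hY3
  have hXM : X * M = Y * M := by
    calc X * M = X * (M * Y * M) := by rw [hY1]
    _ = (X * M) * (Y * M) := by simp only [Matrix.mul_assoc]
    _ = (X * M)ᵀ * (Y * M)ᵀ := by rw [hX4, hY4]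
    _ = (M * X * M)ᵀ * Yᵀ := by simp only [Matrix.transpose_mul, Matrix.mul_assoc]
    _ = Mᵀ * Yᵀ := by rw [hX1]
    _ = (Y * M)ᵀ := (Matrix.transpose_mul Y M).symm
    _ = Y * M := hY4
  calc X = X * M * X := hX2.symm
  _ = X * M * Y := by rw [Matrix.mul_assoc, hMX, ← Matrix.mul_assoc]
  _ = Y * M * Y := by rw [hXM]
  _ = Y := hY2

lemma mp_symm {k : Type*} [Fintype k] {M W : Matrix k k ℝ} (hM : Mᵀ = M)
    (h : IsMoorePenrose M W) : Wᵀ = W := by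
  refine mp_unique ?_ h
  obtain ⟨h1, h2, h3, h4⟩ := h
  refine ⟨?_, ?_, ?_, ?_⟩
  · calc M * Wᵀ * M = (Mᵀ * W * Mᵀ)ᵀ := by
          simp [Matrix.transpose_mul, mul_assoc]
    _ = (M * W * M)ᵀ := by rw [hM]
    _ = Mᵀ := by rw [h1]
    _ = M := hM
  · calc Wᵀ * M * Wᵀ = (W * Mᵀ * W)ᵀ := by simp [Matrix.transpose_mul, mul_assoc]
    _ = (W * M * W)ᵀ := by rw [hM]
    _ = Wᵀ := by rw [h2]
  · calc (M * Wᵀ)ᵀ = W * Mᵀ := by rw [Matrix.transpose_mul, Matrix.transpose_transpose]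
    _ = W * M := by rw [hM]
    _ = (W * M)ᵀ := h4.symm
    _ = Mᵀ * Wᵀ := by rw [Matrix.transpose_mul]
    _ = M * Wᵀ := by rw [hM]
  · calc (Wᵀ * M)ᵀ = Mᵀ * W := by rw [Matrix.transpose_mul, Matrix.transpose_transpose]
    _ = M * W := by rw [hM]
    _ = (M * W)ᵀ := h3.symm
    _ = Wᵀ * Mᵀ := by rw [Matrix.transpose_mul]
    _ = Wᵀ * M := by rw [hM]

lemma submul {a b c d e : Type*} [Fintype b] (X : Matrix a b ℝ) (Y : Matrix b c ℝ)
    (f : d → a) (g : e → c) :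
    (X * Y).submatrix f g = X.submatrix f id * Y.submatrix id g := by
  ext i j; simp [Matrix.mul_apply, Matrix.submatrix_apply]

lemma dot_transpose {a b : Type*} [Fintype a] [Fintype b] (M : Matrix a b ℝ)
    (u : b → ℝ) (w : a → ℝ) : u ⬝ᵥ (Mᵀ *ᵥ w) = (M *ᵥ u) ⬝ᵥ w := by
  rw [Matrix.dotProduct_mulVec, Matrix.vecMul_transpose]

lemma sym_dot {a : Type*} [Fintype a] {M : Matrix a a ℝ} (hM : Mᵀ = M)
    (u v : a → ℝ) : u ⬝ᵥ (M *ᵥ v) = v ⬝ᵥ (M *ᵥ u) := by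
  conv_lhs => rw [← hM]
  rw [dot_transpose, dotProduct_comm]


/-- quadratic form of `Mᵀ M` is a sum of squares -/
lemma dot_self_rep {a b : Type*} [Fintype a] [Fintype b] (D : Matrix a b ℝ) (v : b → ℝ) :
    v ⬝ᵥ ((Dᵀ * D) *ᵥ v) = (D *ᵥ v) ⬝ᵥ (D *ᵥ v) := by
  rw [← Matrix.mulVec_mulVec, dot_transpose]

lemma dot_self_rep_nonneg {a b : Type*} [Fintype a] [Fintype b] (D : Matrix a b ℝ) (v : b → ℝ) :
    0 ≤ v ⬝ᵥ ((Dᵀ * D) *ᵥ v) := by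
  rw [dot_self_rep]
  exact Finset.sum_nonneg fun i _ => mul_self_nonneg _

/-- For psd `M = Bᵀ B`, and `W` a Moore-Penrose inverse of the principal submatrix
`M.submatrix f f`, we have `M_{ff} * (W * M_{fg}) = M_{fg}`. -/
lemma psd_range {a b c : Type*} [Fintype a] [Fintype b] [Fintype c]
    {M : Matrix a a ℝ} {B : Matrix c a ℝ} (hM : M = Bᵀ * B)
    {f : b → a} {W : Matrix b b ℝ} (h : IsMoorePenrose (M.submatrix f f) W)
    {e : Type*} (g : e → a) :
    M.submatrix f f * (W * M.submatrix f g) = M.submatrix f g := by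
  set Bf := B.submatrix id f with hBf
  set N := M.submatrix f f with hNdef
  have hN : N = Bfᵀ * Bf := by
    rw [hNdef, hM, submul, hBf, Matrix.transpose_submatrix]
  have hNsym : Nᵀ = N := by
    rw [hN, Matrix.transpose_mul, Matrix.transpose_transpose]
  set P := N * W with hP
  have hPsym : Pᵀ = P := h.2.2.1
  have hPN : P * N = N := by rw [hP, Matrix.mul_assoc, ← Matrix.mul_assoc]; exact h.1
  have hNP : N * P = N := by
    calc N * P = (Pᵀ * Nᵀ)ᵀ := by
          rw [Matrix.transpose_mul, Matrix.transpose_transpose, Matrix.transpose_transpose]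
    _ = (P * N)ᵀ := by rw [hPsym, hNsym]
    _ = Nᵀ := by rw [hPN]
    _ = N := hNsym
  have hBfTY : Bfᵀ * (Bf - Bf * P) = 0 := by
    rw [Matrix.mul_sub, ← Matrix.mul_assoc, ← hN, hNP, sub_self]
  have hY : (Bf - Bf * P)ᵀ * (Bf - Bf * P) = 0 := by
    have e1 : (Bf - Bf * P)ᵀ * (Bf - Bf * P)
        = Bfᵀ * (Bf - Bf * P) - P * (Bfᵀ * (Bf - Bf * P)) := by
      rw [Matrix.transpose_sub, Matrix.transpose_mul, hPsym, Matrix.sub_mul, Matrix.mul_assoc]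
    rw [e1, hBfTY, Matrix.mul_zero, sub_self]
  have hY0 : Bf - Bf * P = 0 := by
    refine (Matrix.conjTranspose_mul_self_eq_zero (A := Bf - Bf * P)).mp ?_
    rw [conjT_eq_transpose]; exact hY
  have hBfP : Bf * P = Bf := by
    have := hY0
    rw [sub_eq_zero] at this
    exact this.symm
  have hPBfT : P * Bfᵀ = Bfᵀ := by
    calc P * Bfᵀ = (Bf * Pᵀ)ᵀ := by
          rw [Matrix.transpose_mul, Matrix.transpose_transpose]
    _ = (Bf * P)ᵀ := by rw [hPsym]
    _ = Bfᵀ := by rw [hBfP]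
  have hMfg : M.submatrix f g = Bfᵀ * B.submatrix id g := by
    rw [hM, submul, hBf, Matrix.transpose_submatrix]
  calc N * (W * M.submatrix f g) = P * M.submatrix f g := by
        simp only [hP, Matrix.mul_assoc]
  _ = P * Bfᵀ * B.submatrix id g := by rw [hMfg, ← Matrix.mul_assoc]
  _ = Bfᵀ * B.submatrix id g := by rw [hPBfT]
  _ = M.submatrix f g := hMfg.symm


/-- snoc equivalence -/
def snocEquiv (I : Type*) (k : ℕ) : ((Fin k → I) × I) ≃ (Fin (k + 1) → I) where
  toFun p := Fin.snoc p.1 p.2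
  invFun ω := (Fin.init ω, ω (Fin.last k))
  left_inv p := by simp [Fin.init_snoc, Fin.snoc_last]
  right_inv ω := by simp [Fin.snoc_init_self]

lemma traj_snoc {V I : Type*} (step : I → V → V) (x0 : V) (k : ℕ) (ω : Fin k → I) (i : I) :
    traj step x0 (k + 1) (Fin.snoc ω i) = step i (traj step x0 k ω) := by
  have h1 : Fin.init (Fin.snoc ω i : Fin (k + 1) → I) = ω := by simp
  have h2 : (Fin.snoc ω i : Fin (k + 1) → I) (Fin.last k) = i := by simp
  show step ((Fin.snoc ω i : Fin (k + 1) → I) (Fin.last k))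
      (traj step x0 k (Fin.init (Fin.snoc ω i : Fin (k + 1) → I))) = step i (traj step x0 k ω)
  rw [h1, h2]

lemma traj_inv {V I : Type*} (step : I → V → V) (x0 : V) (Inv : V → Prop)
    (hInv : ∀ i v, Inv v → Inv (step i v)) (h0 : Inv x0) :
    ∀ k (ω : Fin k → I), Inv (traj step x0 k ω) := by
  intro k
  induction k with
  | zero => intro ω; exact h0
  | succ m ih => intro ω; exact hInv _ _ (ih _)

lemma exp_contract {V I : Type*} [Fintype I] (q : I → ℝ) (hq : ∀ i, 0 ≤ q i)
    (g : V → ℝ) (st : I → V → V) (Inv : V → Prop) (c : ℝ) (hc : 0 ≤ c)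
    (hInv : ∀ i v, Inv v → Inv (st i v))
    (hstep : ∀ v, Inv v → ∑ i, q i * g (st i v) ≤ c * g v)
    (x0 : V) (h0 : Inv x0) :
    ∀ k, ∑ ω : Fin k → I, (∏ i, q (ω i)) * g (traj st x0 k ω) ≤ c ^ k * g x0 := by
  intro k
  induction k with
  | zero =>
    simp [traj]
  | succ m ih =>
    have hre : ∑ ω : Fin (m + 1) → I, (∏ i, q (ω i)) * g (traj st x0 (m + 1) ω)
        = ∑ p : (Fin m → I) × I,
            (∏ i, q ((Fin.snoc p.1 p.2 : Fin (m + 1) → I) i)) * g (traj st x0 (m + 1) ((Fin.snoc p.1 p.2 : Fin (m + 1) → I))) := by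
      refine (Fintype.sum_equiv (snocEquiv I m) _ _ ?_).symm
      intro p
      rfl
    rw [hre]
    rw [Fintype.sum_prod_type]
    have key : ∀ ω : Fin m → I,
        ∑ i : I, (∏ j, q ((Fin.snoc ω i : Fin (m + 1) → I) j)) * g (traj st x0 (m + 1) ((Fin.snoc ω i : Fin (m + 1) → I)))
        ≤ c * ((∏ j, q (ω j)) * g (traj st x0 m ω)) := by
      intro ω
      have hprod : ∀ i : I, (∏ j, q ((Fin.snoc ω i : Fin (m + 1) → I) j)) = (∏ j, q (ω j)) * q i := by
        intro i
        have : (fun j => q ((Fin.snoc ω i : Fin (m + 1) → I) j)) = Fin.snoc (fun j => q (ω j)) (q i) := by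
          funext j
          exact congrFun (Fin.comp_snoc q ω i) j
        rw [Finset.prod_congr rfl (fun j _ => congrFun this j)]
        exact Fin.prod_snoc _ _
      calc ∑ i : I, (∏ j, q ((Fin.snoc ω i : Fin (m + 1) → I) j)) * g (traj st x0 (m + 1) ((Fin.snoc ω i : Fin (m + 1) → I)))
          = (∏ j, q (ω j)) * ∑ i : I, q i * g (st i (traj st x0 m ω)) := by
            rw [Finset.mul_sum]
            refine Finset.sum_congr rfl fun i _ => ?_
            rw [hprod i, traj_snoc]
            ring
      _ ≤ (∏ j, q (ω j)) * (c * g (traj st x0 m ω)) := by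
            refine mul_le_mul_of_nonneg_left ?_ (Finset.prod_nonneg fun j _ => hq _)
            exact hstep _ (traj_inv st x0 Inv hInv h0 m ω)
      _ = c * ((∏ j, q (ω j)) * g (traj st x0 m ω)) := by ring
    calc ∑ ω : Fin m → I, ∑ i : I,
            (∏ j, q ((Fin.snoc ω i : Fin (m + 1) → I) j)) * g (traj st x0 (m + 1) ((Fin.snoc ω i : Fin (m + 1) → I)))
        ≤ ∑ ω : Fin m → I, c * ((∏ j, q (ω j)) * g (traj st x0 m ω)) :=
          Finset.sum_le_sum fun ω _ => key ω
    _ = c * ∑ ω : Fin m → I, (∏ j, q (ω j)) * g (traj st x0 m ω) := by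
          rw [Finset.mul_sum]
    _ ≤ c * (c ^ m * g x0) := mul_le_mul_of_nonneg_left ih hc
    _ = c ^ (m + 1) * g x0 := by ring


lemma psd_dot_nonneg {n : ℕ} {M : Matrix (Fin n) (Fin n) ℝ} (hM : M.PosSemidef)
    (x : Fin n → ℝ) : 0 ≤ x ⬝ᵥ (M *ᵥ x) := by simpa using hM.dotProduct_mulVec_nonneg x

lemma dot_mulVec_left {a b : Type*} [Fintype a] [Fintype b] (M : Matrix a b ℝ)
    (u : a → ℝ) (w : b → ℝ) : u ⬝ᵥ (M *ᵥ w) = (Mᵀ *ᵥ u) ⬝ᵥ w := by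
  conv_lhs => rw [show M = Mᵀᵀ from (Matrix.transpose_transpose M).symm]
  rw [dot_transpose]

lemma unitary_dot {n : ℕ} {U : Matrix (Fin n) (Fin n) ℝ} (hUtU : Uᵀ * U = 1)
    (w w' : Fin n → ℝ) : (U *ᵥ w) ⬝ᵥ (U *ᵥ w') = w ⬝ᵥ w' := by
  rw [← dot_transpose U w (U *ᵥ w'), Matrix.mulVec_mulVec, hUtU, Matrix.one_mulVec]

lemma lamMinPos_facts {n : ℕ} {M : Matrix (Fin n) (Fin n) ℝ} (hM : M.PosSemidef)
    (htr : 0 < M.trace) :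
    lamMinPos M ≤ M.trace ∧
      ∀ e : Fin n → ℝ, lamMinPos M * (e ⬝ᵥ (M *ᵥ e)) ≤ (M *ᵥ e) ⬝ᵥ (M *ᵥ e) := by
  have hbdd : BddBelow {μ : ℝ | μ ≠ 0 ∧ ∃ v : Fin n → ℝ, v ≠ 0 ∧ M *ᵥ v = μ • v} := by
    refine ⟨0, fun μ hμ => ?_⟩
    obtain ⟨hne, v, hv, heig⟩ := hμ
    have h1 : 0 ≤ v ⬝ᵥ (M *ᵥ v) := psd_dot_nonneg hM v
    rw [heig] at h1
    have h2 : v ⬝ᵥ (μ • v) = μ * (v ⬝ᵥ v) := by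
      simp [dotProduct_smul, smul_eq_mul]
    rw [h2] at h1
    have h3 : 0 < v ⬝ᵥ v := by
      have hge : 0 ≤ v ⬝ᵥ v := by
        have : v ⬝ᵥ v = ∑ i, v i * v i := rfl
        rw [this]
        exact Finset.sum_nonneg fun i _ => mul_self_nonneg _
      rcases hge.lt_or_eq with h | h
      · exact h
      · exact absurd (dotProduct_self_eq_zero.mp h.symm) hv
    by_contra hcon
    push_neg at hcon
    exact absurd h1 (not_le.mpr (mul_neg_of_neg_of_pos hcon h3))
  have hH : M.IsHermitian := hM.1
  set d := hH.eigenvalues with hd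
  have hd0 : ∀ i, 0 ≤ d i := hM.eigenvalues_nonneg
  set U := (hH.eigenvectorUnitary : Matrix (Fin n) (Fin n) ℝ) with hU
  have hspec : M = U * diagonal d * star U := by
    have h := hH.spectral_theorem
    rw [Unitary.conjStarAlgAut_apply] at h
    exact h
  have hUU : star U * U = 1 := Unitary.coe_star_mul_self _
  have hstarU : star U = Uᵀ := by
    rw [Matrix.star_eq_conjTranspose, conjT_eq_transpose]
  have hUtU : Uᵀ * U = 1 := by rw [← hstarU]; exact hUU
  have htrace : M.trace = ∑ i, d i := by
    calc M.trace = ((U * diagonal d) * star U).trace := by rw [← hspec]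
    _ = (star U * (U * diagonal d)).trace := Matrix.trace_mul_comm _ _
    _ = ((star U * U) * diagonal d).trace := by rw [Matrix.mul_assoc]
    _ = (diagonal d).trace := by rw [hUU, Matrix.one_mul]
    _ = ∑ i, d i := Matrix.trace_diagonal _
  have hmem : ∀ i, d i ≠ 0 →
      d i ∈ {μ : ℝ | μ ≠ 0 ∧ ∃ v : Fin n → ℝ, v ≠ 0 ∧ M *ᵥ v = μ • v} := by
    intro i hne
    refine ⟨hne, ⇑(hH.eigenvectorBasis i), ?_, ?_⟩
    · intro h
      have h1 : ‖hH.eigenvectorBasis i‖ = 1 := hH.eigenvectorBasis.orthonormal.1 i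
      have h2 : hH.eigenvectorBasis i = 0 := by ext j; exact congrFun h j
      rw [h2] at h1; simp at h1
    · simpa using hH.mulVec_eigenvectorBasis i
  have hlam_le : ∀ i, d i ≠ 0 → lamMinPos M ≤ d i := fun i hi =>
    csInf_le hbdd (hmem i hi)
  constructor
  · have hex : ∃ i, d i ≠ 0 := by
      by_contra hcon
      push_neg at hcon
      rw [htrace] at htr
      simp [hcon] at htr
    obtain ⟨i0, hi0⟩ := hex
    calc lamMinPos M ≤ d i0 := hlam_le i0 hi0
    _ ≤ ∑ i, d i := Finset.single_le_sum (fun i _ => hd0 i) (Finset.mem_univ i0)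
    _ = M.trace := htrace.symm
  · intro e
    have hMe : M *ᵥ e = U *ᵥ (diagonal d *ᵥ (Uᵀ *ᵥ e)) := by
      calc M *ᵥ e = ((U * diagonal d) * Uᵀ) *ᵥ e := by rw [← hstarU, ← hspec]
      _ = (U * diagonal d) *ᵥ (Uᵀ *ᵥ e) := (Matrix.mulVec_mulVec e (U * diagonal d) Uᵀ).symm
      _ = U *ᵥ (diagonal d *ᵥ (Uᵀ *ᵥ e)) :=
          (Matrix.mulVec_mulVec (Uᵀ *ᵥ e) U (diagonal d)).symm
    have he1 : e ⬝ᵥ (M *ᵥ e) = ∑ i, d i * ((Uᵀ *ᵥ e) i) ^ 2 := by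
      rw [hMe, dot_mulVec_left]
      simp only [dotProduct, Matrix.mulVec_diagonal]
      exact Finset.sum_congr rfl fun i _ => by ring
    have he2 : (M *ᵥ e) ⬝ᵥ (M *ᵥ e) = ∑ i, (d i) ^ 2 * ((Uᵀ *ᵥ e) i) ^ 2 := by
      rw [hMe, unitary_dot hUtU]
      simp only [dotProduct, Matrix.mulVec_diagonal]
      exact Finset.sum_congr rfl fun i _ => by ring
    rw [he1, he2, Finset.mul_sum]
    refine Finset.sum_le_sum fun i _ => ?_
    rcases eq_or_ne (d i) 0 with h | h
    · simp [h]
    · have h5 : lamMinPos M ≤ d i := hlam_le i h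
      have h6 : 0 ≤ d i * ((Uᵀ *ᵥ e) i) ^ 2 := mul_nonneg (hd0 i) (sq_nonneg _)
      calc lamMinPos M * (d i * ((Uᵀ *ᵥ e) i) ^ 2) ≤ d i * (d i * ((Uᵀ *ᵥ e) i) ^ 2) :=
            mul_le_mul_of_nonneg_right h5 h6
      _ = (d i) ^ 2 * ((Uᵀ *ᵥ e) i) ^ 2 := by ring

lemma submatrix_mulVec_apply {a b c : Type*} [Fintype b] (X : Matrix a b ℝ) (f : c → a)
    (v : b → ℝ) (j : c) : (X.submatrix f id *ᵥ v) j = (X *ᵥ v) (f j) := by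
  simp [Matrix.mulVec, dotProduct]

/-- multiplying a selection matrix: `X * E_g = X.submatrix id g` acting on vectors -/
lemma sel_mulVec {N t a : Type*} [Fintype N] [Fintype t] [Fintype a] [DecidableEq N]
    (g : t → N) (α : t → ℝ) (X : Matrix a N ℝ) :
    X *ᵥ ((Matrix.of fun i j => if i = g j then (1 : ℝ) else 0) *ᵥ α)
      = X.submatrix id g *ᵥ α := by
  funext k
  simp only [Matrix.mulVec, dotProduct, Matrix.of_apply, Matrix.submatrix_apply, id_eq,
    ite_mul, one_mul, zero_mul, Finset.mul_sum]
  rw [Finset.sum_comm]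
  refine Finset.sum_congr rfl fun j _ => ?_
  rw [Finset.sum_eq_single (g j)]
  · simp
  · intro i _ hne
    simp [if_neg (fun h => hne h)]
  · intro h
    exact absurd (Finset.mem_univ _) h

lemma sel_dot {N t : Type*} [Fintype N] [Fintype t] [DecidableEq N]
    (g : t → N) (α : t → ℝ) (y : N → ℝ) :
    y ⬝ᵥ ((Matrix.of fun i j => if i = g j then (1 : ℝ) else 0) *ᵥ α)
      = (fun j => y (g j)) ⬝ᵥ α := by
  simp only [dotProduct, Matrix.mulVec, dotProduct, Matrix.of_apply,
    ite_mul, one_mul, zero_mul, Finset.mul_sum]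
  rw [Finset.sum_comm]
  refine Finset.sum_congr rfl fun j _ => ?_
  rw [Finset.sum_eq_single (g j)]
  · simp
  · intro i _ hne
    simp [if_neg (fun h => hne h)]
  · intro h
    exact absurd (Finset.mem_univ _) h

/-- the single-coordinate descent step for the matrix `M` -/
noncomputable def cStep {n : ℕ} (M : Matrix (Fin n) (Fin n) ℝ) (j : Fin n) (v : Fin n → ℝ) :
    Fin n → ℝ :=
  v - (if M j j = 0 then 0 else (M *ᵥ v) j / M j j) • (Pi.single j 1 : Fin n → ℝ)

lemma diag_apply {n : ℕ} {M D : Matrix (Fin n) (Fin n) ℝ} (hDA : M = Dᵀ * D) (j : Fin n) :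
    M j j = ∑ k, (D k j) ^ 2 := by
  rw [hDA]
  simp only [Matrix.mul_apply, Matrix.transpose_apply]
  exact Finset.sum_congr rfl fun k _ => by ring

lemma diag_zero {n : ℕ} {M D : Matrix (Fin n) (Fin n) ℝ} (hDA : M = Dᵀ * D) (j : Fin n)
    (h : M j j = 0) (v : Fin n → ℝ) : (M *ᵥ v) j = 0 := by
  have hcol : ∀ k, D k j = 0 := by
    intro k
    have h1 : ∑ k, (D k j) ^ 2 = 0 := by rw [← diag_apply hDA]; exact h
    have h2 := (Finset.sum_eq_zero_iff_of_nonneg (fun i _ => sq_nonneg (D i j))).mp h1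
    exact (pow_eq_zero_iff two_ne_zero).mp (h2 k (Finset.mem_univ k))
  rw [hDA, ← Matrix.mulVec_mulVec]
  simp only [Matrix.mulVec, dotProduct, Matrix.transpose_apply]
  exact Finset.sum_eq_zero fun k _ => by rw [hcol k, zero_mul]

lemma quad_expand_single {n : ℕ} {M : Matrix (Fin n) (Fin n) ℝ} (hMs : Mᵀ = M)
    (v : Fin n → ℝ) (j : Fin n) (c : ℝ) :
    (v - c • (Pi.single j 1 : Fin n → ℝ)) ⬝ᵥ (M *ᵥ (v - c • (Pi.single j 1 : Fin n → ℝ)))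
      = v ⬝ᵥ (M *ᵥ v) - 2 * c * (M *ᵥ v) j + c ^ 2 * M j j := by
  have hu1 : (Pi.single j 1 : Fin n → ℝ) ⬝ᵥ (M *ᵥ v) = (M *ᵥ v) j := by
    simp [dotProduct, Pi.single_apply]
  have hu2 : v ⬝ᵥ (M *ᵥ (Pi.single j 1 : Fin n → ℝ)) = (M *ᵥ v) j := by
    rw [sym_dot hMs]; exact hu1
  have hu3 : (Pi.single j 1 : Fin n → ℝ) ⬝ᵥ (M *ᵥ (Pi.single j 1 : Fin n → ℝ)) = M j j := by
    have : M *ᵥ (Pi.single j 1 : Fin n → ℝ) = fun i => M i j := by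
      funext i
      simp [Matrix.mulVec, dotProduct, Pi.single_apply]
    rw [this]
    simp [dotProduct, Pi.single_apply]
  rw [Matrix.mulVec_sub, Matrix.mulVec_smul]
  rw [sub_dotProduct, dotProduct_sub, dotProduct_sub,
    smul_dotProduct, dotProduct_smul, smul_dotProduct,
    dotProduct_smul]
  simp only [smul_eq_mul]
  rw [hu1, hu2, hu3]
  ring

lemma cStep_contract {n : ℕ} {M D : Matrix (Fin n) (Fin n) ℝ} (hDA : M = Dᵀ * D)
    (htr : 0 < M.trace) (p : Fin n → ℝ) (hp : ∀ j, p j = M j j / M.trace) (v : Fin n → ℝ) :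
    ∑ j, p j * ((cStep M j v) ⬝ᵥ (M *ᵥ cStep M j v))
      ≤ (1 - lamMinPos M / M.trace) * (v ⬝ᵥ (M *ᵥ v)) := by
  have hMs : Mᵀ = M := by
    rw [hDA, Matrix.transpose_mul, Matrix.transpose_transpose]
  have hpsd : M.PosSemidef := by
    refine (show (∃ B : Matrix (Fin n) (Fin n) ℝ, M = Bᴴ * B) → M.PosSemidef from
      fun ⟨B, hB⟩ => hB ▸ Matrix.posSemidef_conjTranspose_mul_self B) ⟨D, ?_⟩
    rw [conjT_eq_transpose]; exact hDA
  have htrsum : M.trace = ∑ j, M j j := by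
    simp [Matrix.trace, Matrix.diag]
  have hterm : ∀ j, p j * ((cStep M j v) ⬝ᵥ (M *ᵥ cStep M j v))
      = p j * (v ⬝ᵥ (M *ᵥ v)) - ((M *ᵥ v) j) ^ 2 / M.trace := by
    intro j
    rcases eq_or_ne (M j j) 0 with h | h
    · have hr0 : (M *ᵥ v) j = 0 := diag_zero hDA j h v
      have hp0 : p j = 0 := by rw [hp j, h, zero_div]
      rw [hp0, hr0]
      ring
    · have hc : cStep M j v = v - ((M *ᵥ v) j / M j j) • (Pi.single j 1 : Fin n → ℝ) := by
        simp only [cStep, if_neg h]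
      rw [hc, quad_expand_single hMs, hp j]
      have htrne : M.trace ≠ 0 := ne_of_gt htr
      field_simp
      ring
  calc ∑ j, p j * ((cStep M j v) ⬝ᵥ (M *ᵥ cStep M j v))
      = ∑ j, (p j * (v ⬝ᵥ (M *ᵥ v)) - ((M *ᵥ v) j) ^ 2 / M.trace) :=
        Finset.sum_congr rfl fun j _ => hterm j
  _ = (∑ j, p j) * (v ⬝ᵥ (M *ᵥ v)) - (∑ j, ((M *ᵥ v) j) ^ 2) / M.trace := by
        rw [Finset.sum_sub_distrib, ← Finset.sum_mul, ← Finset.sum_div]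
  _ = (v ⬝ᵥ (M *ᵥ v)) - ((M *ᵥ v) ⬝ᵥ (M *ᵥ v)) / M.trace := by
        have hsum : ∑ j, p j = 1 := by
          have h7 : ∑ j, p j = (∑ j, M j j) / M.trace := by
            rw [Finset.sum_div]
            exact Finset.sum_congr rfl fun j _ => hp j
          rw [h7, ← htrsum, div_self (ne_of_gt htr)]
        have hdd : (M *ᵥ v) ⬝ᵥ (M *ᵥ v) = ∑ j, ((M *ᵥ v) j) ^ 2 :=
          Finset.sum_congr rfl fun j _ => (pow_two _).symm
        rw [hsum, one_mul, hdd]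
  _ ≤ (v ⬝ᵥ (M *ᵥ v)) - lamMinPos M * (v ⬝ᵥ (M *ᵥ v)) / M.trace := by
        have hq := (lamMinPos_facts hpsd htr).2 v
        exact sub_le_sub_left (div_le_div_of_nonneg_right hq (le_of_lt htr)) _
  _ = (1 - lamMinPos M / M.trace) * (v ⬝ᵥ (M *ᵥ v)) := by ring

lemma quad_sub {N : Type*} [Fintype N] {M : Matrix N N ℝ} (hMs : Mᵀ = M) (u w : N → ℝ) :
    (u - w) ⬝ᵥ (M *ᵥ (u - w))
      = u ⬝ᵥ (M *ᵥ u) - 2 * (u ⬝ᵥ (M *ᵥ w)) + w ⬝ᵥ (M *ᵥ w) := by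
  simp only [Matrix.mulVec_sub, sub_dotProduct, dotProduct_sub]
  rw [sym_dot hMs w u]
  ring

lemma submatrix_sub {a b c d : Type*} (X Y : Matrix a b ℝ) (f : c → a) (g : d → b) :
    (X - Y).submatrix f g = X.submatrix f g - Y.submatrix f g := by
  ext i j
  simp [Matrix.submatrix_apply]

lemma cStep_traj_form {n : ℕ} (M : Matrix (Fin n) (Fin n) ℝ) (v : Fin n → ℝ) :
    ∀ (m : ℕ) (K : Fin m → Fin n), ∃ γ : Fin m → ℝ,
      traj (cStep M) v m K = v - fun i => ∑ t, if i = K t then γ t else 0 := by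
  intro m
  induction m with
  | zero =>
    intro K
    refine ⟨fun _ => 0, ?_⟩
    show v = _
    funext i
    simp
  | succ m ih =>
    intro K
    obtain ⟨γ, hγ⟩ := ih (Fin.init K)
    set j := K (Fin.last m) with hj
    set w := traj (cStep M) v m (Fin.init K) with hw
    set c := if M j j = 0 then 0 else (M *ᵥ w) j / M j j with hcdef
    refine ⟨Fin.snoc γ c, ?_⟩
    have hshow : traj (cStep M) v (m + 1) K = cStep M j w := rfl
    rw [hshow]
    have hcs : cStep M j w = w - c • (Pi.single j 1 : Fin n → ℝ) := by
      simp only [cStep, hcdef]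
    rw [hcs, hγ]
    funext i
    have hsum : ∑ t : Fin (m + 1), (if i = K t then Fin.snoc γ c t else 0)
        = (∑ t : Fin m, if i = Fin.init K t then γ t else 0)
          + (if i = j then c else 0) := by
      rw [Fin.sum_univ_castSucc]
      congr 1
      · refine Finset.sum_congr rfl fun t _ => ?_
        have h1 : (Fin.snoc γ c : Fin (m + 1) → ℝ) t.castSucc = γ t := by simp
        have h2 : K t.castSucc = Fin.init K t := rfl
        rw [h1, h2]
      · have h1 : (Fin.snoc γ c : Fin (m + 1) → ℝ) (Fin.last m) = c := by simp
        rw [h1, hj]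
    simp only [Pi.sub_apply, Pi.smul_apply, smul_eq_mul]
    rw [hsum]
    have hps : (Pi.single j 1 : Fin n → ℝ) i = if i = j then 1 else 0 := by
      rw [Pi.single_apply]
    rw [hps]
    by_cases h : i = j
    · simp [h]
      ring
    · simp [h]

end SCRCD

/-- SC-RCD convergence, diagonal sampling. For psd `A`, pivot set
`S`, Nyström residual `A° = A − A_{:,S}(A_{S,S})†A_{S,:}` with `tr(A°) > 0`, and
blocks of `ℓ` coordinates sampled i.i.d. with probabilities `A°_{j,j}/tr(A°)`, the
SC-RCD iterates satisfy
`E‖x^k − x*‖_A² ≤ (1 − λmin⁺(A°)/tr(A°))^{kℓ} ‖x^0 − x*‖_A²`. -/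
theorem stmt_12 {n l : ℕ}
    (A : Matrix (Fin n) (Fin n) ℝ) (hA : A.PosSemidef)
    (b : Fin n → ℝ) (hconsistent : ∃ x, A *ᵥ x = b)
    (xstar : Fin n → ℝ) (hxstar : A *ᵥ xstar = b)
    (S : Finset (Fin n))
    -- `W = (A_{S,S})†`
    (W : Matrix {j // j ∈ S} {j // j ∈ S} ℝ)
    (hW : IsMoorePenrose (A.submatrix (fun j : {j // j ∈ S} => (j : Fin n))
      (fun j : {j // j ∈ S} => (j : Fin n))) W)
    -- the Nyström residual `A° = A − A_{:,S}(A_{S,S})†A_{S,:}`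
    (Ao : Matrix (Fin n) (Fin n) ℝ)
    (hAo : Ao = A - A.submatrix id (fun j : {j // j ∈ S} => (j : Fin n)) * W *
      A.submatrix (fun j : {j // j ∈ S} => (j : Fin n)) id)
    (htr : 0 < Ao.trace)
    -- the auxiliary matrix `C = (A_{S,S})† A_{S,:}`
    (C : Matrix {j // j ∈ S} (Fin n) ℝ)
    (hC : C = W * A.submatrix (fun j : {j // j ∈ S} => (j : Fin n)) id)
    -- `pJ J = (A°_{J,J})†` for a block `J` of `ℓ` coordinates
    (pJ : (Fin l → Fin n) → Matrix (Fin l) (Fin l) ℝ)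
    (hpJ : ∀ J : Fin l → Fin n, IsMoorePenrose (Ao.submatrix J J) (pJ J))
    -- coordinate selection matrices `e_S` and `e_J`
    (eS : Matrix (Fin n) {j // j ∈ S} ℝ)
    (heS : eS = Matrix.of fun i j => if i = j.val then 1 else 0)
    (eJ : (Fin l → Fin n) → Matrix (Fin n) (Fin l) ℝ)
    (heJ : ∀ J, eJ J = Matrix.of fun i t => if i = J t then 1 else 0)
    -- the SC-RCD update: `x^{k+1} = x^k − e_J α + e_S β` with `α = (A°_{J,J})† r_J`,
    -- `β = C_{:,J} α`, and `r = A x^k − b`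
    (step : (Fin l → Fin n) → (Fin n → ℝ) → (Fin n → ℝ))
    (hstep : ∀ (J : Fin l → Fin n) (x : Fin n → ℝ),
      step J x = x - eJ J *ᵥ (pJ J *ᵥ fun t => (A *ᵥ x - b) (J t))
        + eS *ᵥ (C.submatrix id J *ᵥ (pJ J *ᵥ fun t => (A *ᵥ x - b) (J t))))
    -- `x0` solves the subsystem `A_{S,:} x = b_S`
    (x0 : Fin n → ℝ)
    (hx0 : A.submatrix (fun j : {j // j ∈ S} => (j : Fin n)) id *ᵥ x0 =
      fun j : {j // j ∈ S} => b j)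
    -- the coordinate sampling probabilities `A°_{j,j}/tr(A°)`
    (p : Fin n → ℝ) (hp : ∀ j, p j = Ao j j / Ao.trace) :
    ∀ k : ℕ,
      ∑ ω : Fin k → (Fin l → Fin n), (∏ i, ∏ t, p (ω i t)) *
          ((traj step x0 k ω - xstar) ⬝ᵥ (A *ᵥ (traj step x0 k ω - xstar))) ≤
        (1 - lamMinPos Ao / Ao.trace) ^ (k * l) *
          ((x0 - xstar) ⬝ᵥ (A *ᵥ (x0 - xstar))) := by
    classical
  intro k
  obtain ⟨B, hB'⟩ : ∃ B : Matrix (Fin n) (Fin n) ℝ, A = Bᴴ * B := by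
      open scoped MatrixOrder in
      exact CStarAlgebra.nonneg_iff_eq_star_mul_self.mp hA.nonneg
  have hB : A = Bᵀ * B := by rw [← SCRCD.conjT_eq_transpose]; exact hB'
  set ι : {j // j ∈ S} → Fin n := fun j => (j : Fin n) with hι
  have hAsym : Aᵀ = A := by rw [← SCRCD.conjT_eq_transpose]; exact hA.1
  set Bf := B.submatrix id ι with hBf
  have htBf : Bᵀ.submatrix ι id = Bfᵀ := by rw [hBf, Matrix.transpose_submatrix]
  have hAidincl : A.submatrix id ι = Bᵀ * Bf := by
    rw [hB, SCRCD.submul, Matrix.submatrix_id_id, ← hBf]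
  have hAinclid : A.submatrix ι id = Bfᵀ * B := by
    rw [hB, SCRCD.submul, Matrix.submatrix_id_id, htBf]
  have hNsub : A.submatrix ι ι = Bfᵀ * Bf := by
    rw [hB, SCRCD.submul, htBf, ← hBf]
  have hNsym : (A.submatrix ι ι)ᵀ = A.submatrix ι ι := by
    rw [Matrix.transpose_submatrix, hAsym]
  have hWsym : Wᵀ = W := SCRCD.mp_symm hNsym hW
  set Q := Bf * W * Bfᵀ with hQ
  have hQsym : Qᵀ = Q := by
    rw [hQ]
    simp [Matrix.transpose_mul, Matrix.transpose_transpose, hWsym, Matrix.mul_assoc]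
  have hQQ : Q * Q = Q := by
    have h2 : W * A.submatrix ι ι * W = W := hW.2.1
    rw [hNsub] at h2
    calc Q * Q = Bf * (W * (Bfᵀ * Bf) * W) * Bfᵀ := by
          rw [hQ]; simp only [Matrix.mul_assoc]
    _ = Bf * W * Bfᵀ := by rw [h2]
    _ = Q := hQ.symm
  set DD := B - Q * B with hDDdef
  have hDA : Ao = DDᵀ * DD := by
    have hQQB : Bᵀ * Q * (Q * B) = Bᵀ * (Q * B) := by
      calc Bᵀ * Q * (Q * B) = Bᵀ * (Q * Q * B) := by simp only [Matrix.mul_assoc]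
      _ = Bᵀ * (Q * B) := by rw [hQQ]
    have hDDexp : DDᵀ * DD = Bᵀ * B - Bᵀ * (Q * B) := by
      calc DDᵀ * DD = (Bᵀ - Bᵀ * Q) * (B - Q * B) := by
            rw [hDDdef, Matrix.transpose_sub, Matrix.transpose_mul, hQsym]
      _ = Bᵀ * B - Bᵀ * (Q * B) - (Bᵀ * Q * B - Bᵀ * Q * (Q * B)) := by
            rw [Matrix.sub_mul, Matrix.mul_sub, Matrix.mul_sub]
      _ = Bᵀ * B - Bᵀ * (Q * B) - (Bᵀ * (Q * B) - Bᵀ * (Q * B)) := by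
            rw [hQQB, Matrix.mul_assoc Bᵀ Q B]
      _ = Bᵀ * B - Bᵀ * (Q * B) := by rw [sub_self, sub_zero]
    have hmid : A.submatrix id ι * W * A.submatrix ι id = Bᵀ * (Q * B) := by
      rw [hAidincl, hAinclid, hQ]; simp only [Matrix.mul_assoc]
    rw [hAo, hmid, hDDexp, ← hB]
  have hAoSym : Aoᵀ = Ao := by
    rw [hDA, Matrix.transpose_mul, Matrix.transpose_transpose]
  have hAopsd : Ao.PosSemidef := by
    refine (show (∃ B : Matrix (Fin n) (Fin n) ℝ, Ao = Bᴴ * B) → Ao.PosSemidef from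
      fun ⟨B, hB⟩ => hB ▸ Matrix.posSemidef_conjTranspose_mul_self B) ⟨DD, ?_⟩
    rw [SCRCD.conjT_eq_transpose]; exact hDA
  obtain ⟨hlam_le_tr, hlam_quad⟩ := SCRCD.lamMinPos_facts hAopsd htr
  have hcc0 : 0 ≤ 1 - lamMinPos Ao / Ao.trace := by
    have h1 : lamMinPos Ao / Ao.trace ≤ 1 := (div_le_one htr).mpr hlam_le_tr
    linarith
  have hp0 : ∀ j, 0 ≤ p j := by
    intro j
    rw [hp j]
    refine div_nonneg ?_ htr.le
    rw [SCRCD.diag_apply hDA]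
    exact Finset.sum_nonneg fun m _ => sq_nonneg _
  set Inv : (Fin n → ℝ) → Prop := fun x => ∀ j : {j // j ∈ S}, (A *ᵥ x) (ι j) = b j
    with hInvDef
  have h0 : Inv x0 := by
    intro j
    have h1 := congrFun hx0 j
    rw [SCRCD.submatrix_mulVec_apply] at h1
    exact h1
  have key : ∀ x, Inv x →
      (∀ J, Inv (step J x)) ∧
      (∑ J : Fin l → Fin n, (∏ t, p (J t)) *
          ((step J x - xstar) ⬝ᵥ (A *ᵥ (step J x - xstar)))
        ≤ (1 - lamMinPos Ao / Ao.trace) ^ l * ((x - xstar) ⬝ᵥ (A *ᵥ (x - xstar)))) := by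
    intro x hx
    set e := x - xstar with he
    have hre : A *ᵥ x - b = A *ᵥ e := by rw [he, Matrix.mulVec_sub, hxstar]
    have hrS : ∀ j : {j // j ∈ S}, (A *ᵥ e) (ι j) = 0 := by
      intro j
      have h1 : (A *ᵥ x - b) (ι j) = 0 := by
        have h2 := hx j
        simp only [Pi.sub_apply]
        rw [h2]
        exact sub_self _
      rwa [hre] at h1
    have hS0 : A.submatrix ι id *ᵥ e = 0 := by
      funext j
      rw [SCRCD.submatrix_mulVec_apply]
      exact hrS j
    have hAe : A *ᵥ e = Ao *ᵥ e := by
      rw [hAo, Matrix.sub_mulVec]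
      have h9 : (A.submatrix id ι * W * A.submatrix ι id) *ᵥ e = 0 := by
        calc (A.submatrix id ι * W * A.submatrix ι id) *ᵥ e
            = (A.submatrix id ι * W) *ᵥ (A.submatrix ι id *ᵥ e) :=
              (Matrix.mulVec_mulVec e _ _).symm
        _ = (A.submatrix id ι * W) *ᵥ 0 := by rw [hS0]
        _ = 0 := Matrix.mulVec_zero _
      rw [h9, sub_zero]
    have hfe : e ⬝ᵥ (A *ᵥ e) = e ⬝ᵥ (Ao *ᵥ e) := by rw [hAe]
    have perJ : ∀ J : Fin l → Fin n,
        Inv (step J x) ∧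
        ((step J x - xstar) ⬝ᵥ (A *ᵥ (step J x - xstar))
          ≤ (traj (SCRCD.cStep Ao) e l J) ⬝ᵥ (Ao *ᵥ (traj (SCRCD.cStep Ao) e l J))) := by
      intro J
      set rJ : Fin l → ℝ := fun t => (A *ᵥ x - b) (J t) with hrJdef
      have hrJ : rJ = fun t => (Ao *ᵥ e) (J t) := by
        funext t
        rw [hrJdef]
        simp only
        rw [hre, hAe]
      have hrJ' : rJ = Ao.submatrix J id *ᵥ e := by
        rw [hrJ]
        funext t
        rw [SCRCD.submatrix_mulVec_apply]
      set α : Fin l → ℝ := pJ J *ᵥ rJ with hα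
      set NJ := Ao.submatrix J J with hNJ
      have hNJsym : NJᵀ = NJ := by rw [hNJ, Matrix.transpose_submatrix, hAoSym]
      have hNJrep : NJ = (DD.submatrix id J)ᵀ * DD.submatrix id J := by
        rw [hNJ, hDA, SCRCD.submul, Matrix.transpose_submatrix]
      have hNJnonneg : ∀ v : Fin l → ℝ, 0 ≤ v ⬝ᵥ (NJ *ᵥ v) := by
        intro v; rw [hNJrep]; exact SCRCD.dot_self_rep_nonneg _ _
      have hrange : NJ * (pJ J * Ao.submatrix J id) = Ao.submatrix J id :=
        SCRCD.psd_range hDA (hpJ J) id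
      have hNy : NJ *ᵥ α = rJ := by
        rw [hα, hrJ']
        calc NJ *ᵥ (pJ J *ᵥ (Ao.submatrix J id *ᵥ e))
            = (NJ * (pJ J * Ao.submatrix J id)) *ᵥ e := by
              rw [Matrix.mulVec_mulVec e (pJ J) (Ao.submatrix J id),
                Matrix.mulVec_mulVec e NJ (pJ J * Ao.submatrix J id)]
        _ = Ao.submatrix J id *ᵥ e := by rw [hrange]
      set u1 : Fin n → ℝ := eJ J *ᵥ α with hu1
      set β : {j // j ∈ S} → ℝ := C.submatrix id J *ᵥ α with hβdef
      set u2 : Fin n → ℝ := eS *ᵥ β with hu2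
      have hXu1 : ∀ {a : Type} [Fintype a] (X : Matrix a (Fin n) ℝ),
          X *ᵥ u1 = X.submatrix id J *ᵥ α := by
        intro a _ X
        rw [hu1, heJ J]
        exact SCRCD.sel_mulVec J α X
      have hXu2 : ∀ {a : Type} [Fintype a] (X : Matrix a (Fin n) ℝ),
          X *ᵥ u2 = X.submatrix id ι *ᵥ β := by
        intro a _ X
        rw [hu2, heS]
        exact SCRCD.sel_mulVec ι β X
      have hydot1 : ∀ y : Fin n → ℝ, y ⬝ᵥ u1 = (fun t => y (J t)) ⬝ᵥ α := by
        intro y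
        rw [hu1, heJ J]
        exact SCRCD.sel_dot J α y
      have hydot2 : ∀ y : Fin n → ℝ, y ⬝ᵥ u2 = (fun j => y (ι j)) ⬝ᵥ β := by
        intro y
        rw [hu2, heS]
        exact SCRCD.sel_dot ι β y
      set uS : {j // j ∈ S} → ℝ := A.submatrix ι J *ᵥ α with huS
      have hCsub : C.submatrix id J = W * A.submatrix ι J := by
        rw [hC, SCRCD.submul, Matrix.submatrix_id_id, Matrix.submatrix_submatrix]
        rfl
      have hβ : β = W *ᵥ uS := by
        rw [hβdef, hCsub, huS, ← Matrix.mulVec_mulVec]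
      have hAJincl : A.submatrix J ι = (A.submatrix ι J)ᵀ := by
        rw [Matrix.transpose_submatrix, hAsym]
      have heAu1 : e ⬝ᵥ (A *ᵥ u1) = rJ ⬝ᵥ α := by
        rw [SCRCD.sym_dot hAsym, dotProduct_comm, hydot1]
        congr 1
        rw [hrJ, hAe]
      have heAu2 : e ⬝ᵥ (A *ᵥ u2) = 0 := by
        rw [SCRCD.sym_dot hAsym, dotProduct_comm, hydot2]
        have h1 : (fun j => (A *ᵥ e) (ι j)) = (0 : {j // j ∈ S} → ℝ) := by
          funext j; exact hrS j
        rw [h1, zero_dotProduct]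
      have hu1Au1 : u1 ⬝ᵥ (A *ᵥ u1) = α ⬝ᵥ (A.submatrix J J *ᵥ α) := by
        rw [dotProduct_comm, hydot1]
        have h1 : (fun t => (A *ᵥ u1) (J t)) = A.submatrix J J *ᵥ α := by
          funext t
          rw [show (A *ᵥ u1) (J t) = (A.submatrix J id *ᵥ u1) t from
            (SCRCD.submatrix_mulVec_apply A J u1 t).symm]
          rw [hXu1 (A.submatrix J id), Matrix.submatrix_submatrix]
          rfl
        rw [h1, dotProduct_comm]
      have hu1Au2 : u1 ⬝ᵥ (A *ᵥ u2) = uS ⬝ᵥ (W *ᵥ uS) := by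
        rw [dotProduct_comm, hydot1]
        have h1 : (fun t => (A *ᵥ u2) (J t)) = A.submatrix J ι *ᵥ β := by
          funext t
          rw [show (A *ᵥ u2) (J t) = (A.submatrix J id *ᵥ u2) t from
            (SCRCD.submatrix_mulVec_apply A J u2 t).symm]
          rw [hXu2 (A.submatrix J id), Matrix.submatrix_submatrix]
          rfl
        rw [h1, dotProduct_comm, hAJincl, SCRCD.dot_transpose, hβ, ← huS]
      have hu2Au2 : u2 ⬝ᵥ (A *ᵥ u2) = uS ⬝ᵥ (W *ᵥ uS) := by
        rw [dotProduct_comm, hydot2]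
        have h1 : (fun j => (A *ᵥ u2) (ι j)) = A.submatrix ι ι *ᵥ β := by
          funext j
          rw [show (A *ᵥ u2) (ι j) = (A.submatrix ι id *ᵥ u2) j from
            (SCRCD.submatrix_mulVec_apply A ι u2 j).symm]
          rw [hXu2 (A.submatrix ι id), Matrix.submatrix_submatrix]
          rfl
        rw [h1, dotProduct_comm, hβ]
        have h2 : (W *ᵥ uS) ⬝ᵥ (A.submatrix ι ι *ᵥ (W *ᵥ uS))
            = uS ⬝ᵥ ((W * (A.submatrix ι ι * W)) *ᵥ uS) := by
          rw [← SCRCD.dot_transpose W uS, hWsym,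
            Matrix.mulVec_mulVec uS (A.submatrix ι ι) W,
            Matrix.mulVec_mulVec uS W (A.submatrix ι ι * W)]
        rw [h2]
        have h3 : W * (A.submatrix ι ι * W) = W := by
          rw [← Matrix.mul_assoc]; exact hW.2.1
        rw [h3]
      have hNJdec : α ⬝ᵥ (NJ *ᵥ α)
          = α ⬝ᵥ (A.submatrix J J *ᵥ α) - uS ⬝ᵥ (W *ᵥ uS) := by
        have hZ : (A.submatrix id ι * W * A.submatrix ι id).submatrix J J
            = A.submatrix J ι * (W * A.submatrix ι J) := by
          rw [Matrix.mul_assoc, SCRCD.submul, SCRCD.submul, Matrix.submatrix_id_id,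
            Matrix.submatrix_submatrix, Matrix.submatrix_submatrix]
          rfl
        have h1 : NJ = A.submatrix J J - A.submatrix J ι * (W * A.submatrix ι J) := by
          rw [hNJ, hAo, SCRCD.submatrix_sub, hZ]
        rw [h1, Matrix.sub_mulVec, dotProduct_sub]
        congr 1
        have h2 : (A.submatrix J ι * (W * A.submatrix ι J)) *ᵥ α
            = A.submatrix J ι *ᵥ (W *ᵥ uS) := by
          rw [huS, Matrix.mulVec_mulVec α W (A.submatrix ι J),
            Matrix.mulVec_mulVec α (A.submatrix J ι) (W * A.submatrix ι J)]
        rw [h2, hAJincl, SCRCD.dot_transpose, ← huS]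
      have hnewe : step J x - xstar = e - (u1 - u2) := by
        rw [hstep J x, ← hrJdef, ← hα, ← hu1, ← hβdef, ← hu2, he]
        abel
      have hfnew : (step J x - xstar) ⬝ᵥ (A *ᵥ (step J x - xstar))
          = e ⬝ᵥ (Ao *ᵥ e) - 2 * (rJ ⬝ᵥ α) + α ⬝ᵥ (NJ *ᵥ α) := by
        rw [hnewe, SCRCD.quad_sub hAsym]
        have h1 : e ⬝ᵥ (A *ᵥ (u1 - u2)) = rJ ⬝ᵥ α := by
          rw [Matrix.mulVec_sub, dotProduct_sub, heAu1, heAu2, sub_zero]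
        have h2 : (u1 - u2) ⬝ᵥ (A *ᵥ (u1 - u2)) = α ⬝ᵥ (NJ *ᵥ α) := by
          rw [SCRCD.quad_sub hAsym u1 u2, hu1Au1, hu1Au2, hu2Au2, hNJdec]
          ring
        rw [h1, h2, hfe]
      have hopt : ∀ γ : Fin l → ℝ,
          e ⬝ᵥ (Ao *ᵥ e) - 2 * (rJ ⬝ᵥ α) + α ⬝ᵥ (NJ *ᵥ α)
            ≤ e ⬝ᵥ (Ao *ᵥ e) - 2 * (rJ ⬝ᵥ γ) + γ ⬝ᵥ (NJ *ᵥ γ) := by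
        intro γ
        have hpos : 0 ≤ (γ - α) ⬝ᵥ (NJ *ᵥ (γ - α)) := hNJnonneg _
        have hexp : (γ - α) ⬝ᵥ (NJ *ᵥ (γ - α))
            = γ ⬝ᵥ (NJ *ᵥ γ) - 2 * (α ⬝ᵥ (NJ *ᵥ γ)) + α ⬝ᵥ (NJ *ᵥ α) := by
          rw [SCRCD.quad_sub hNJsym, SCRCD.sym_dot hNJsym γ α]
        have e1 : rJ ⬝ᵥ γ = α ⬝ᵥ (NJ *ᵥ γ) := by
          rw [← hNy, ← SCRCD.dot_transpose NJ α γ, hNJsym]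
        have e2 : rJ ⬝ᵥ α = α ⬝ᵥ (NJ *ᵥ α) := by
          rw [← hNy, ← SCRCD.dot_transpose NJ α α, hNJsym]
        rw [e1, e2]
        linarith [hpos, hexp]
      obtain ⟨γ, hγ⟩ := SCRCD.cStep_traj_form Ao e l J
      have hsumγ : (fun i => ∑ t, if i = J t then γ t else 0) = eJ J *ᵥ γ := by
        funext i
        rw [heJ J]
        simp [Matrix.mulVec, dotProduct, ite_mul, one_mul, zero_mul]
      have hseq : traj (SCRCD.cStep Ao) e l J = e - eJ J *ᵥ γ := by
        rw [hγ, hsumγ]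
      have t1 : e ⬝ᵥ (Ao *ᵥ (eJ J *ᵥ γ)) = rJ ⬝ᵥ γ := by
        rw [SCRCD.sym_dot hAoSym, dotProduct_comm, heJ J,
          SCRCD.sel_dot J γ (Ao *ᵥ e), ← hrJ]
      have t2 : (eJ J *ᵥ γ) ⬝ᵥ (Ao *ᵥ (eJ J *ᵥ γ)) = γ ⬝ᵥ (NJ *ᵥ γ) := by
        rw [dotProduct_comm, heJ J, SCRCD.sel_dot J γ _]
        have h1 : (fun t => (Ao *ᵥ ((Matrix.of fun i t' => if i = J t' then (1:ℝ) else 0) *ᵥ γ)) (J t))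
            = NJ *ᵥ γ := by
          funext t
          rw [show (Ao *ᵥ ((Matrix.of fun i t' => if i = J t' then (1:ℝ) else 0) *ᵥ γ)) (J t)
              = (Ao.submatrix J id *ᵥ ((Matrix.of fun i t' => if i = J t' then (1:ℝ) else 0) *ᵥ γ)) t from
            (SCRCD.submatrix_mulVec_apply Ao J _ t).symm]
          rw [SCRCD.sel_mulVec J γ (Ao.submatrix J id), Matrix.submatrix_submatrix]
          rfl
        rw [h1, dotProduct_comm]
      have hseq_energy : (traj (SCRCD.cStep Ao) e l J) ⬝ᵥ (Ao *ᵥ (traj (SCRCD.cStep Ao) e l J))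
          = e ⬝ᵥ (Ao *ᵥ e) - 2 * (rJ ⬝ᵥ γ) + γ ⬝ᵥ (NJ *ᵥ γ) := by
        rw [hseq, SCRCD.quad_sub hAoSym, t1, t2]
      constructor
      · intro j0
        have hAstep : A *ᵥ step J x = A *ᵥ x - A *ᵥ u1 + A *ᵥ u2 := by
          rw [hstep J x, ← hrJdef, ← hα, ← hu1, ← hβdef, ← hu2,
            Matrix.mulVec_add, Matrix.mulVec_sub]
        have h1 : (A *ᵥ u1) (ι j0) = uS j0 := by
          rw [show (A *ᵥ u1) (ι j0) = (A.submatrix ι id *ᵥ u1) j0 from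
            (SCRCD.submatrix_mulVec_apply A ι u1 j0).symm]
          rw [hXu1 (A.submatrix ι id), Matrix.submatrix_submatrix, huS]
          rfl
        have h2 : (A *ᵥ u2) (ι j0) = uS j0 := by
          rw [show (A *ᵥ u2) (ι j0) = (A.submatrix ι id *ᵥ u2) j0 from
            (SCRCD.submatrix_mulVec_apply A ι u2 j0).symm]
          rw [hXu2 (A.submatrix ι id), Matrix.submatrix_submatrix]
          have h3 : (A.submatrix ι ι *ᵥ β) = uS := by
            rw [hβ, huS, Matrix.mulVec_mulVec α W (A.submatrix ι J),
              Matrix.mulVec_mulVec α (A.submatrix ι ι) (W * A.submatrix ι J),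
              SCRCD.psd_range hB hW J]
          rw [show A.submatrix (ι ∘ id) (id ∘ ι) = A.submatrix ι ι from rfl, h3]
        rw [hAstep]
        simp only [Pi.add_apply, Pi.sub_apply]
        rw [h1, h2, hx j0]
        ring
      · rw [hfnew, hseq_energy]
        exact hopt γ
    refine ⟨fun J => (perJ J).1, ?_⟩
    have hq0 : ∀ J : Fin l → Fin n, 0 ≤ ∏ t, p (J t) :=
      fun J => Finset.prod_nonneg fun t _ => hp0 _
    calc ∑ J : Fin l → Fin n, (∏ t, p (J t)) *
            ((step J x - xstar) ⬝ᵥ (A *ᵥ (step J x - xstar)))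
        ≤ ∑ J : Fin l → Fin n, (∏ t, p (J t)) *
            ((traj (SCRCD.cStep Ao) e l J) ⬝ᵥ (Ao *ᵥ (traj (SCRCD.cStep Ao) e l J))) :=
          Finset.sum_le_sum fun J _ => mul_le_mul_of_nonneg_left (perJ J).2 (hq0 J)
    _ ≤ (1 - lamMinPos Ao / Ao.trace) ^ l * (e ⬝ᵥ (Ao *ᵥ e)) :=
          SCRCD.exp_contract p hp0 (fun v => v ⬝ᵥ (Ao *ᵥ v)) (SCRCD.cStep Ao)
            (fun _ => True) _ hcc0 (fun _ _ _ => trivial)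
            (fun v _ => SCRCD.cStep_contract hDA htr p hp v) e trivial l
    _ = (1 - lamMinPos Ao / Ao.trace) ^ l * ((x - xstar) ⬝ᵥ (A *ᵥ (x - xstar))) := by
          rw [← he, hfe]
  have final := SCRCD.exp_contract (fun J : Fin l → Fin n => ∏ t, p (J t))
      (fun J => Finset.prod_nonneg fun t _ => hp0 _)
      (fun x => (x - xstar) ⬝ᵥ (A *ᵥ (x - xstar))) step Inv
      ((1 - lamMinPos Ao / Ao.trace) ^ l) (pow_nonneg hcc0 l)
      (fun J x hx => (key x hx).1 J)
      (fun x hx => (key x hx).2) x0 h0 k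
  have hpow : ((1 - lamMinPos Ao / Ao.trace) ^ l) ^ k
      = (1 - lamMinPos Ao / Ao.trace) ^ (k * l) := by
    rw [← pow_mul, Nat.mul_comm]
  rw [← hpow]
  exact final
end
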